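/- arXiv:1908.03065 — 3 statements merged into one kernel-verified Lean document; each statement's English description precedes it below -/
import Mathlib

section
/- Let f_1,…,f_m be integrable real functions on (0,1) for which all iterated integrals g(f_{i_1},…,f_{i_l}) below are absolutely convergent, where g(f_1,…,f_m) := ∫_{0<t_m<⋯<t_2<t_1<1} f_1(t_1) f_2(t_2) ⋯ f_m(t_m) dt_1 dt_2 ⋯ dt_m. Then g(f_1, f_2, …, f_m) + (−1)^m g(f_m, f_{m−1}, …, f_1) = Σ_{i=1}^{m−1} (−1)^{i−1} g(f_i, f_{i−1}, …, f_1) · g(f_{i+1}, f_{i+2}, …, f_m). -/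
open MeasureTheory

/-- The open simplex `{0 < t_N < ⋯ < t₂ < t₁ < t}` (coordinates strictly decreasing
in the index, all lying in `(0, t)`). -/
def simplexTo (N : ℕ) (t : ℝ) : Set (Fin N → ℝ) :=
  {u | (∀ i, 0 < u i ∧ u i < t) ∧ ∀ i j : Fin N, i < j → u j < u i}

/-- The iterated integral `∫_{0 < t_N < ⋯ < t₁ < t} f₁(t₁) ⋯ f_N(t_N) dt₁ ⋯ dt_N`
of a word `fs = [f₁, …, f_N]` of integrands. -/
noncomputable def itIntegralTo (fs : List (ℝ → ℝ)) (t : ℝ) : ℝ :=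
  ∫ u in simplexTo fs.length t, ∏ i : Fin fs.length, fs.get i (u i)

/-- The iterated integral `∫_{0 < t_N < ⋯ < t₁ < 1} f₁(t₁) ⋯ f_N(t_N) dt₁ ⋯ dt_N`. -/
noncomputable def itIntegral (fs : List (ℝ → ℝ)) : ℝ := itIntegralTo fs 1

/-- The integrand `u ↦ ∏ᵢ fᵢ(uᵢ)` on the simplex, for a word `fs` of functions. -/
def simplexProd (fs : List (ℝ → ℝ)) : (Fin fs.length → ℝ) → ℝ :=
  fun u => ∏ i : Fin fs.length, fs.get i (u i)

/-- The reversed prefix `(f_i, f_{i-1}, …, f₁)`. -/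
def prefRev (f : ℕ → ℝ → ℝ) (i : ℕ) : List (ℝ → ℝ) :=
  ((List.range i).map fun l => f (l + 1)).reverse

/-- The suffix `(f_{i+1}, f_{i+2}, …, f_m)`. -/
def suff (f : ℕ → ℝ → ℝ) (m i : ℕ) : List (ℝ → ℝ) :=
  (List.range (m - i)).map fun l => f (i + l + 1)


def ascSet (n : ℕ) : Set (Fin n → ℝ) :=
  {u | (∀ k, 0 < u k ∧ u k < 1) ∧ ∀ j k : Fin n, j < k → u j < u k}

def ascDesc (n p : ℕ) : Set (Fin n → ℝ) :=
  {u | (∀ k, 0 < u k ∧ u k < 1) ∧ (∀ j k : Fin n, j < k → (k : ℕ) < p → u j < u k)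
      ∧ (∀ j k : Fin n, j < k → p ≤ (j : ℕ) → u k < u j)}

def peak (n p : ℕ) : Set (Fin n → ℝ) :=
  {u | (∀ k, 0 < u k ∧ u k < 1) ∧ (∀ j k : Fin n, j < k → (k : ℕ) ≤ p → u j < u k)
      ∧ (∀ j k : Fin n, j < k → p ≤ (j : ℕ) → u k < u j)}

lemma measurableSet_chain {n : ℕ} (r : Fin n → Fin n → Prop) :
    MeasurableSet {u : Fin n → ℝ | ∀ j k, r j k → u j < u k} := by
  have h : {u : Fin n → ℝ | ∀ j k, r j k → u j < u k}
      = ⋂ j, ⋂ k, ⋂ (_ : r j k), {u | u j < u k} := by ext u; simp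
  rw [h]
  exact .iInter fun j => .iInter fun k => .iInter fun _ =>
    measurableSet_lt (measurable_pi_apply j) (measurable_pi_apply k)

lemma measurableSet_bounds {n : ℕ} {t : ℝ} :
    MeasurableSet {u : Fin n → ℝ | ∀ k, 0 < u k ∧ u k < t} := by
  have h : {u : Fin n → ℝ | ∀ k, 0 < u k ∧ u k < t}
      = ⋂ k, ({u : Fin n → ℝ | 0 < u k} ∩ {u | u k < t}) := by ext u; simp [Set.mem_iInter, forall_and]
  rw [h]
  exact .iInter fun k =>
    (measurableSet_lt measurable_const (measurable_pi_apply k)).inter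
      (measurableSet_lt (measurable_pi_apply k) measurable_const)

lemma measurableSet_peak {n p : ℕ} : MeasurableSet (peak n p) := by
  have h : peak n p = {u : Fin n → ℝ | ∀ k, 0 < u k ∧ u k < 1}
      ∩ ({u | ∀ j k : Fin n, (j < k ∧ (k : ℕ) ≤ p) → u j < u k}
        ∩ {u | ∀ j k : Fin n, (k < j ∧ p ≤ (k : ℕ)) → u j < u k}) := by
    ext u
    simp only [peak, Set.mem_setOf_eq, Set.mem_inter_iff, and_imp]
    constructor
    · rintro ⟨h1, h2, h3⟩; exact ⟨h1, fun j k a b => h2 j k a b, fun j k a b => h3 k j a b⟩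
    · rintro ⟨h1, h2, h3⟩; exact ⟨h1, fun j k a b => h2 j k a b, fun j k a b => h3 k j a b⟩
  rw [h]
  exact measurableSet_bounds.inter ((measurableSet_chain _).inter (measurableSet_chain _))

lemma null_eq {n : ℕ} (a b : Fin n) (hab : a ≠ b) :
    volume {w : Fin n → ℝ | w a = w b} = 0 := by
  set L : (Fin n → ℝ) →ₗ[ℝ] ℝ := (LinearMap.proj a : (Fin n → ℝ) →ₗ[ℝ] ℝ) - (LinearMap.proj b : (Fin n → ℝ) →ₗ[ℝ] ℝ) with hL
  have h : {w : Fin n → ℝ | w a = w b} = (LinearMap.ker L : Set (Fin n → ℝ)) := by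
    ext w
    simp [hL, LinearMap.mem_ker, sub_eq_zero, eq_comm]
  rw [h]
  apply Measure.addHaar_submodule
  intro htop
  have hmem : (Pi.single a (1 : ℝ)) ∈ LinearMap.ker L := htop ▸ Submodule.mem_top
  simp [hL, LinearMap.mem_ker, Pi.single_eq_of_ne hab.symm] at hmem

noncomputable def SI (n : ℕ) (g : Fin n → ℝ → ℝ) : ℝ :=
  ∫ u in simplexTo n 1, ∏ k, g k (u k)

noncomputable def ASI (n : ℕ) (g : Fin n → ℝ → ℝ) : ℝ :=
  ∫ u in ascSet n, ∏ k, g k (u k)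

noncomputable def ADI (n p : ℕ) (g : Fin n → ℝ → ℝ) : ℝ :=
  ∫ u in ascDesc n p, ∏ k, g k (u k)

noncomputable def PKI (n p : ℕ) (g : Fin n → ℝ → ℝ) : ℝ :=
  ∫ u in peak n p, ∏ k, g k (u k)

def ISI (n : ℕ) (g : Fin n → ℝ → ℝ) : Prop :=
  IntegrableOn (fun u => ∏ k, g k (u k)) (simplexTo n 1) volume

def IAS (n : ℕ) (g : Fin n → ℝ → ℝ) : Prop :=
  IntegrableOn (fun u => ∏ k, g k (u k)) (ascSet n) volume

def IAD (n p : ℕ) (g : Fin n → ℝ → ℝ) : Prop :=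
  IntegrableOn (fun u => ∏ k, g k (u k)) (ascDesc n p) volume

lemma SI_congr {n n' : ℕ} (h : n = n') {g : Fin n → ℝ → ℝ} {g' : Fin n' → ℝ → ℝ}
    (hg : ∀ k : Fin n', g (Fin.cast h.symm k) = g' k) : SI n g = SI n' g' := by
  subst h
  have : g = g' := funext fun k => hg k
  rw [this]

lemma ADI_congr {n n' : ℕ} (h : n = n') {p : ℕ} {g : Fin n → ℝ → ℝ} {g' : Fin n' → ℝ → ℝ}
    (hg : ∀ k : Fin n', g (Fin.cast h.symm k) = g' k) : ADI n p g = ADI n' p g' := by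
  subst h
  have : g = g' := funext fun k => hg k
  rw [this]

lemma IAD_congr {n n' : ℕ} (h : n = n') {p : ℕ} {g : Fin n → ℝ → ℝ} {g' : Fin n' → ℝ → ℝ}
    (hg : ∀ k : Fin n', g (Fin.cast h.symm k) = g' k) : IAD n p g ↔ IAD n' p g' := by
  subst h
  have : g = g' := funext fun k => hg k
  rw [this]

lemma ISI_congr {n n' : ℕ} (h : n = n') {g : Fin n → ℝ → ℝ} {g' : Fin n' → ℝ → ℝ}
    (hg : ∀ k : Fin n', g (Fin.cast h.symm k) = g' k) : ISI n g ↔ ISI n' g' := by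
  subst h
  have : g = g' := funext fun k => hg k
  rw [this]

section rev
variable (n : ℕ)

noncomputable def revT : (Fin n → ℝ) ≃ᵐ (Fin n → ℝ) :=
  MeasurableEquiv.piCongrLeft (fun _ : Fin n => ℝ) Fin.revPerm

lemma revT_apply (x : Fin n → ℝ) (k : Fin n) : revT n x k = x k.rev := by
  have := MeasurableEquiv.piCongrLeft_apply_apply (β := fun _ : Fin n => ℝ)
    Fin.revPerm x k.rev
  simpa [revT] using this

lemma revT_preimage : (revT n) ⁻¹' (simplexTo n 1) = ascSet n := by
  ext x
  simp only [Set.mem_preimage, simplexTo, ascSet, Set.mem_setOf_eq, revT_apply]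
  constructor
  · rintro ⟨h1, h2⟩
    refine ⟨fun k => by simpa using h1 k.rev, fun j k hjk => ?_⟩
    have := h2 k.rev j.rev (by simpa [Fin.rev_lt_rev] using hjk)
    simpa using this
  · rintro ⟨h1, h2⟩
    refine ⟨fun k => h1 k.rev, fun j k hjk => ?_⟩
    exact h2 k.rev j.rev (by simpa [Fin.rev_lt_rev] using hjk)

lemma prod_rev (g : Fin n → ℝ → ℝ) (x : Fin n → ℝ) :
    (∏ k, g k (x k.rev)) = ∏ k, g k.rev (x k) := by
  have := Equiv.prod_comp Fin.revPerm (fun k => g k.rev (x k))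
  simpa using this

lemma SI_rev (g : Fin n → ℝ → ℝ) : SI n g = ASI n (fun k => g k.rev) := by
  have hT : MeasurePreserving (revT n) volume volume :=
    volume_measurePreserving_piCongrLeft (fun _ : Fin n => ℝ) Fin.revPerm
  have h2 := hT.setIntegral_preimage_emb (revT n).measurableEmbedding
    (fun u => ∏ k, g k (u k)) (simplexTo n 1)
  rw [revT_preimage] at h2
  rw [SI, ← h2, ASI]
  refine integral_congr_ae (Filter.Eventually.of_forall fun x => ?_)
  simp only [revT_apply]
  exact prod_rev n g x

lemma ISI_rev (g : Fin n → ℝ → ℝ) : ISI n g ↔ IAS n (fun k => g k.rev) := by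
  have hT : MeasurePreserving (revT n) volume volume :=
    volume_measurePreserving_piCongrLeft (fun _ : Fin n => ℝ) Fin.revPerm
  have hfun : ((fun u => ∏ k, g k (u k)) ∘ (revT n)) = fun x => ∏ k, g k.rev (x k) :=
    funext fun x => by
      simp only [Function.comp_apply, revT_apply]
      exact prod_rev n g x
  rw [ISI, IAS, ← hT.integrableOn_comp_preimage (revT n).measurableEmbedding,
    revT_preimage, hfun]

end rev

section fub
variable (i j : ℕ)

noncomputable def EE : ((Fin i → ℝ) × (Fin j → ℝ)) ≃ᵐ (Fin (i + j) → ℝ) :=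
  (MeasurableEquiv.sumPiEquivProdPi (fun _ : Fin i ⊕ Fin j => ℝ)).symm.trans
    (MeasurableEquiv.piCongrLeft (fun _ => ℝ) finSumFinEquiv)

lemma EE_mp : MeasurePreserving (EE i j) volume volume :=
  (volume_measurePreserving_piCongrLeft (fun _ => ℝ) finSumFinEquiv).comp
    (volume_measurePreserving_sumPiEquivProdPi_symm (fun _ : Fin i ⊕ Fin j => ℝ))

lemma EE_left (u : Fin i → ℝ) (v : Fin j → ℝ) (a : Fin i) :
    EE i j (u, v) (Fin.castAdd j a) = u a := by
  rw [← finSumFinEquiv_apply_left]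
  exact Equiv.piCongrLeft_sumInl (fun _ => ℝ) finSumFinEquiv u v a

lemma EE_right (u : Fin i → ℝ) (v : Fin j → ℝ) (b : Fin j) :
    EE i j (u, v) (Fin.natAdd i b) = v b := by
  rw [← finSumFinEquiv_apply_right]
  exact Equiv.piCongrLeft_sumInr (fun _ => ℝ) finSumFinEquiv u v b

lemma EE_apply (u : Fin i → ℝ) (v : Fin j → ℝ) (k : Fin (i + j)) :
    EE i j (u, v) k = if h : (k : ℕ) < i then u ⟨k, h⟩ else v ⟨(k : ℕ) - i, by omega⟩ := by
  induction k using Fin.addCases with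
  | left a =>
      rw [EE_left, dif_pos (by simp)]
      congr 1
  | right b =>
      rw [EE_right, dif_neg (by simp)]
      congr 1
      exact Fin.ext (by simp)

lemma EE_preimage : (EE i j) ⁻¹' (ascDesc (i + j) i) = (ascSet i) ×ˢ (simplexTo j 1) := by
  ext ⟨u, v⟩
  simp only [Set.mem_preimage, Set.mem_prod, ascDesc, ascSet, simplexTo, Set.mem_setOf_eq]
  constructor
  · rintro ⟨h1, h2, h3⟩
    refine ⟨⟨fun a => ?_, fun a b hab => ?_⟩, fun b => ?_, fun a b hab => ?_⟩
    · have := h1 (Fin.castAdd j a); rwa [EE_left] at this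
    · have := h2 (Fin.castAdd j a) (Fin.castAdd j b)
        (Fin.lt_def.mpr (Fin.lt_def.mp hab)) (b.isLt)
      rwa [EE_left, EE_left] at this
    · have := h1 (Fin.natAdd i b); rwa [EE_right] at this
    · have := h3 (Fin.natAdd i a) (Fin.natAdd i b)
        (Fin.lt_def.mpr (by simp only [Fin.coe_natAdd]; exact Nat.add_lt_add_left (Fin.lt_def.mp hab) i)) (by simp)
      rwa [EE_right, EE_right] at this
  · rintro ⟨⟨hu1, hu2⟩, hv1, hv2⟩
    refine ⟨fun k => ?_, fun a b hab hbi => ?_, fun a b hab hia => ?_⟩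
    · rw [EE_apply]
      split_ifs with h
      · exact hu1 _
      · exact hv1 _
    · rw [EE_apply, EE_apply, dif_pos (show (a : ℕ) < i by
        have := (Fin.lt_def.mp hab); omega), dif_pos hbi]
      exact hu2 _ _ (Fin.mk_lt_mk.mpr (Fin.lt_def.mp hab))
    · have hib : i ≤ (b : ℕ) := by have := (Fin.lt_def.mp hab); omega
      rw [EE_apply, EE_apply, dif_neg (by omega), dif_neg (by omega)]
      exact hv2 _ _ (Fin.mk_lt_mk.mpr (by have := (Fin.lt_def.mp hab); omega))

lemma EE_prod (g₁ : Fin i → ℝ → ℝ) (g₂ : Fin j → ℝ → ℝ)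
    (p : (Fin i → ℝ) × (Fin j → ℝ)) :
    (∏ k, Fin.append g₁ g₂ k (EE i j p k)) = (∏ a, g₁ a (p.1 a)) * ∏ b, g₂ b (p.2 b) := by
  obtain ⟨u, v⟩ := p
  rw [Fin.prod_univ_add]
  congr 1
  · exact Finset.prod_congr rfl fun a _ => by rw [EE_left, Fin.append_left]
  · exact Finset.prod_congr rfl fun b _ => by rw [EE_right, Fin.append_right]

lemma fubini_step (g₁ : Fin i → ℝ → ℝ) (g₂ : Fin j → ℝ → ℝ) :
    ASI i g₁ * SI j g₂ = ADI (i + j) i (Fin.append g₁ g₂) := by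
  have h2 := (EE_mp i j).setIntegral_preimage_emb (EE i j).measurableEmbedding
    (fun w => ∏ k, Fin.append g₁ g₂ k (w k)) (ascDesc (i + j) i)
  rw [ADI, ← h2, EE_preimage]
  have key : (∫ p in (ascSet i ×ˢ simplexTo j 1),
      ((∏ a, g₁ a (p.1 a)) * ∏ b, g₂ b (p.2 b))
        ∂(volume : Measure ((Fin i → ℝ) × (Fin j → ℝ)))) = ASI i g₁ * SI j g₂ := by
    rw [Measure.volume_eq_prod, ← Measure.prod_restrict]
    exact integral_prod_mul (L := ℝ) (fun u : Fin i → ℝ => ∏ a, g₁ a (u a)) (fun v : Fin j → ℝ => ∏ b, g₂ b (v b))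
  rw [← key]
  exact (integral_congr_ae (Filter.Eventually.of_forall fun p => (EE_prod i j g₁ g₂ p))).symm

lemma fubini_int (g₁ : Fin i → ℝ → ℝ) (g₂ : Fin j → ℝ → ℝ)
    (h1 : IAS i g₁) (h2 : ISI j g₂) : IAD (i + j) i (Fin.append g₁ g₂) := by
  have hp : Integrable
      (fun p : (Fin i → ℝ) × (Fin j → ℝ) => (∏ a, g₁ a (p.1 a)) * ∏ b, g₂ b (p.2 b))
      ((volume.restrict (ascSet i)).prod (volume.restrict (simplexTo j 1))) :=
    Integrable.mul_prod h1 h2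
  rw [Measure.prod_restrict] at hp
  have hiff := (EE_mp i j).integrableOn_comp_preimage (EE i j).measurableEmbedding
    (f := fun w => ∏ k, Fin.append g₁ g₂ k (w k)) (s := ascDesc (i + j) i)
  rw [IAD, ← hiff, EE_preimage]
  have hfun : ((fun w => ∏ k, Fin.append g₁ g₂ k (w k)) ∘ (EE i j)) =
      fun p : (Fin i → ℝ) × (Fin j → ℝ) => (∏ a, g₁ a (p.1 a)) * ∏ b, g₂ b (p.2 b) :=
    funext fun p => EE_prod i j g₁ g₂ p
  rw [IntegrableOn, hfun, Measure.volume_eq_prod]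
  exact hp

end fub

lemma peak_subset_ascDesc {n p q : ℕ} (h1 : p ≤ q) (h2 : q ≤ p + 1) :
    peak n p ⊆ ascDesc n q := by
  rintro w ⟨w1, w2, w3⟩
  exact ⟨w1, fun j k hjk hk => w2 j k hjk (by omega),
    fun j k hjk hj => w3 j k hjk (by omega)⟩

lemma peak_zero (n : ℕ) : peak n 0 = simplexTo n 1 := by
  ext u
  simp only [peak, simplexTo, Set.mem_setOf_eq]
  constructor
  · rintro ⟨h1, _, h3⟩
    exact ⟨h1, fun p q hpq => h3 p q hpq (Nat.zero_le _)⟩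
  · rintro ⟨h1, h2⟩
    refine ⟨h1, fun p q hpq hq => ?_, fun p q hpq _ => h2 p q hpq⟩
    exact absurd (Fin.lt_def.mp hpq) (by omega)

lemma peak_top (n : ℕ) : peak n (n - 1) = ascSet n := by
  ext u
  simp only [peak, ascSet, Set.mem_setOf_eq]
  constructor
  · rintro ⟨h1, h2, _⟩
    exact ⟨h1, fun p q hpq => h2 p q hpq (by have := q.isLt; omega)⟩
  · rintro ⟨h1, h2⟩
    refine ⟨h1, fun p q hpq _ => h2 p q hpq, fun p q hpq hp => ?_⟩
    have := q.isLt
    have := Fin.lt_def.mp hpq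
    omega

lemma peak_disjoint {n i : ℕ} (h1 : 1 ≤ i) (h2 : i < n) :
    Disjoint (peak n (i - 1)) (peak n i) := by
  rw [Set.disjoint_left]
  rintro w ⟨_, _, wd⟩ ⟨_, wa, _⟩
  have hab : (⟨i - 1, by omega⟩ : Fin n) < ⟨i, h2⟩ := Fin.mk_lt_mk.mpr (by omega)
  have l1 : w ⟨i - 1, by omega⟩ < w ⟨i, h2⟩ := wa _ _ hab (by simp)
  have l2 : w ⟨i, h2⟩ < w ⟨i - 1, by omega⟩ := wd _ _ hab (by simp)
  exact absurd l1 (not_lt.mpr l2.le)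

lemma ascDesc_diff_subset {n i : ℕ} (h1 : 1 ≤ i) (h2 : i < n) :
    ascDesc n i \ {w : Fin n → ℝ | w ⟨i - 1, by omega⟩ = w ⟨i, h2⟩}
      ⊆ peak n (i - 1) ∪ peak n i := by
  rintro w ⟨⟨w1, w2, w3⟩, hne⟩
  simp only [Set.mem_setOf_eq] at hne
  set a : Fin n := ⟨i - 1, by omega⟩ with ha
  set b : Fin n := ⟨i, h2⟩ with hb
  rcases lt_or_gt_of_ne hne with hlt | hgt
  · -- w a < w b : peak at i
    right
    refine ⟨w1, fun p q hpq hq => ?_, fun p q hpq hp => w3 p q hpq hp⟩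
    by_cases hq' : (q : ℕ) < i
    · exact w2 p q hpq hq'
    · have hqb : q = b := Fin.ext (by simp [hb]; omega)
      rw [hqb]
      by_cases hp' : (p : ℕ) < i - 1
      · have : w p < w a := w2 p a (Fin.lt_def.mpr (by simp [ha]; omega)) (by simp [ha]; omega)
        exact this.trans hlt
      · have hpa : p = a := by
          have := Fin.lt_def.mp hpq
          exact Fin.ext (by simp [ha]; omega)
        rw [hpa]; exact hlt
  · -- w b < w a : peak at i - 1
    left
    refine ⟨w1, fun p q hpq hq => w2 p q hpq (by omega), fun p q hpq hp => ?_⟩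
    by_cases hp' : i ≤ (p : ℕ)
    · exact w3 p q hpq hp'
    · have hpa : p = a := Fin.ext (by simp [ha]; omega)
      rw [hpa]
      have hqv : i ≤ (q : ℕ) := by
        have := Fin.lt_def.mp hpq
        simp [ha] at this ⊢
        omega
      by_cases hq' : (q : ℕ) = i
      · have : q = b := Fin.ext (by simp [hb, hq'])
        rw [this]; exact hgt
      · have : w q < w b := w3 b q (Fin.lt_def.mpr (by simp [hb]; omega)) (by simp [hb])
        exact this.trans hgt

lemma split {n i : ℕ} (h1 : 1 ≤ i) (h2 : i < n) (g : Fin n → ℝ → ℝ)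
    (hΦ : IAD n i g) : ADI n i g = PKI n (i - 1) g + PKI n i g := by
  set N : Set (Fin n → ℝ) := {w | w ⟨i - 1, by omega⟩ = w ⟨i, h2⟩} with hN
  have hNnull : volume N = 0 :=
    null_eq _ _ (Fin.ne_of_val_ne (show i - 1 ≠ i by omega))
  have hsub1 : peak n (i - 1) ⊆ ascDesc n i := peak_subset_ascDesc (by omega) (by omega)
  have hsub2 : peak n i ⊆ ascDesc n i := peak_subset_ascDesc le_rfl (by omega)
  have hae : ascDesc n i =ᵐ[volume] ((peak n (i - 1) ∪ peak n i : Set (Fin n → ℝ))) := by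
    rw [MeasureTheory.ae_eq_set]
    refine ⟨measure_mono_null ?_ hNnull, ?_⟩
    · rintro w ⟨hw1, hw2⟩
      by_contra hwN
      exact hw2 (ascDesc_diff_subset h1 h2 ⟨hw1, hwN⟩)
    · have he : (peak n (i - 1) ∪ peak n i) \ ascDesc n i = ∅ :=
        Set.diff_eq_empty.mpr (Set.union_subset hsub1 hsub2)
      rw [he]
      simp
  rw [ADI, setIntegral_congr_set hae,
    setIntegral_union (peak_disjoint h1 h2) measurableSet_peak
      (hΦ.mono_set hsub1) (hΦ.mono_set hsub2)]
  rfl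

lemma itIntegral_eq (fs : List (ℝ → ℝ)) :
    itIntegral fs = SI fs.length (fun k => fs.get k) := rfl

lemma itIntegral_word (m : ℕ) (f : ℕ → ℝ → ℝ) :
    itIntegral ((List.range m).map fun l => f (l + 1)) = SI m (fun k => f (k + 1)) := by
  refine (itIntegral_eq _).trans (SI_congr (by simp) fun k => ?_)
  simp

lemma itIntegral_prefRev (f : ℕ → ℝ → ℝ) (i : ℕ) :
    itIntegral (prefRev f i) = SI i (fun k => f (i - (k : ℕ))) := by
  have hlen : (prefRev f i).length = i := by simp [prefRev]
  refine (itIntegral_eq _).trans (SI_congr hlen fun k => ?_)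
  have hk := k.isLt
  simp only [prefRev, List.get_eq_getElem, Fin.coe_cast, List.getElem_reverse,
    List.getElem_map, List.getElem_range, List.length_map, List.length_range]
  have harith : i - 1 - (k : ℕ) + 1 = i - (k : ℕ) := by omega
  exact congrArg f harith

lemma itIntegral_suff (f : ℕ → ℝ → ℝ) (m i : ℕ) :
    itIntegral (suff f m i) = SI (m - i) (fun k => f (i + (k : ℕ) + 1)) := by
  have hlen : (suff f m i).length = m - i := by simp [suff]
  refine (itIntegral_eq _).trans (SI_congr hlen fun k => ?_)
  simp [suff]
  rfl

lemma rev_val_eq (i : ℕ) (k : Fin i) : i - ((k.rev : Fin i) : ℕ) = (k : ℕ) + 1 := by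
  have hk := k.isLt
  rw [Fin.val_rev]
  omega

lemma prefRev_asc (f : ℕ → ℝ → ℝ) (i : ℕ) :
    itIntegral (prefRev f i) = ASI i (fun k => f ((k : ℕ) + 1)) := by
  rw [itIntegral_prefRev, SI_rev]
  have hfun : (fun k : Fin i => f (i - ((k.rev : Fin i) : ℕ))) = fun k : Fin i => f ((k : ℕ) + 1) :=
    funext fun k => by rw [rev_val_eq]
  rw [hfun]

lemma prefRev_int (f : ℕ → ℝ → ℝ) (i : ℕ)
    (h : ISI (prefRev f i).length (fun k => (prefRev f i).get k)) :
    IAS i (fun k => f ((k : ℕ) + 1)) := by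
  have hlen : (prefRev f i).length = i := by simp [prefRev]
  have h1 : ISI i (fun k => f (i - (k : ℕ))) := by
    refine (ISI_congr hlen (fun k => ?_)).mp h
    have hk := k.isLt
    simp only [prefRev, List.get_eq_getElem, Fin.coe_cast, List.getElem_reverse,
      List.getElem_map, List.getElem_range, List.length_map, List.length_range]
    have harith : i - 1 - (k : ℕ) + 1 = i - (k : ℕ) := by omega
    exact congrArg f harith
  have h2 := (ISI_rev i _).mp h1
  have : (fun k : Fin i => f (i - ((k.rev : Fin i) : ℕ))) = fun k : Fin i => f ((k : ℕ) + 1) := by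
    funext k; rw [rev_val_eq]
  rwa [this] at h2

lemma suff_int (f : ℕ → ℝ → ℝ) (m i : ℕ)
    (h : ISI (suff f m i).length (fun k => (suff f m i).get k)) :
    ISI (m - i) (fun k => f (i + (k : ℕ) + 1)) := by
  have hlen : (suff f m i).length = m - i := by simp [suff]
  refine (ISI_congr hlen (fun k => ?_)).mp h
  simp [suff]
  rfl

lemma telescope (Q : ℕ → ℝ) (n : ℕ) :
    ∑ i ∈ Finset.Icc 1 n, (-1 : ℝ) ^ (i - 1) * (Q (i - 1) + Q i)
      = Q 0 + (-1 : ℝ) ^ (n + 1) * Q n := by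
  induction n with
  | zero => simp
  | succ n ih =>
      have hins : Finset.Icc 1 (n + 1) = insert (n + 1) (Finset.Icc 1 n) := by
        ext x; simp only [Finset.mem_Icc, Finset.mem_insert]; omega
      rw [hins, Finset.sum_insert (by simp), ih]
      simp only [Nat.add_sub_cancel]
      rw [pow_succ, pow_succ]
      ring

lemma middle (m : ℕ) (f : ℕ → ℝ → ℝ) (i : ℕ) (h1 : 1 ≤ i) (h2 : i < m)
    (hp : IAS i (fun k => f ((k : ℕ) + 1)))
    (hs : ISI (m - i) (fun k => f (i + (k : ℕ) + 1))) :
    itIntegral (prefRev f i) * itIntegral (suff f m i)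
      = PKI m (i - 1) (fun k : Fin m => f ((k : ℕ) + 1))
        + PKI m i (fun k : Fin m => f ((k : ℕ) + 1)) := by
  rw [prefRev_asc, itIntegral_suff, fubini_step i (m - i) _ _]
  have hm : i + (m - i) = m := by omega
  have happ : ∀ k : Fin m,
      Fin.append (fun k : Fin i => f ((k : ℕ) + 1)) (fun k : Fin (m - i) => f (i + (k : ℕ) + 1))
        (Fin.cast hm.symm k) = f ((k : ℕ) + 1) := by
    intro k
    have hkm := k.isLt
    by_cases hk : (k : ℕ) < i
    · have hc : Fin.cast hm.symm k = Fin.castAdd (m - i) ⟨(k : ℕ), hk⟩ := Fin.ext rfl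
      rw [hc, Fin.append_left]
    · have hc : Fin.cast hm.symm k = Fin.natAdd i ⟨(k : ℕ) - i, by omega⟩ :=
        Fin.ext (by simp; omega)
      rw [hc, Fin.append_right]
      show f (i + ((k : ℕ) - i) + 1) = f ((k : ℕ) + 1)
      have harith : i + ((k : ℕ) - i) + 1 = (k : ℕ) + 1 := by omega
      rw [harith]
  rw [ADI_congr hm happ]
  have hint : IAD m i (fun k : Fin m => f ((k : ℕ) + 1)) :=
    (IAD_congr hm happ).mp (fubini_int i (m - i) _ _ hp hs)
  exact split h1 h2 _ hint


theorem stmt3 (m : ℕ) (hm : 1 ≤ m) (f : ℕ → ℝ → ℝ)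
    (hInt : ∀ i ≤ m,
      IntegrableOn (simplexProd (prefRev f i)) (simplexTo (prefRev f i).length 1) volume ∧
      IntegrableOn (simplexProd (suff f m i)) (simplexTo (suff f m i).length 1) volume) :
    itIntegral ((List.range m).map fun l => f (l + 1)) +
        (-1 : ℝ) ^ m * itIntegral (((List.range m).map fun l => f (l + 1)).reverse) =
      ∑ i ∈ Finset.Icc 1 (m - 1),
        (-1 : ℝ) ^ (i - 1) * itIntegral (prefRev f i) * itIntegral (suff f m i) := by
  have hword : itIntegral ((List.range m).map fun l => f (l + 1))
      = PKI m 0 (fun k : Fin m => f ((k : ℕ) + 1)) := by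
    rw [itIntegral_word, SI, PKI, peak_zero]
  have hrev : itIntegral (((List.range m).map fun l => f (l + 1)).reverse)
      = PKI m (m - 1) (fun k : Fin m => f ((k : ℕ) + 1)) := by
    have hdef : (((List.range m).map fun l => f (l + 1)).reverse) = prefRev f m := rfl
    rw [hdef, prefRev_asc, ASI, PKI, peak_top]
  have hkey : ∀ i ∈ Finset.Icc 1 (m - 1),
      (-1 : ℝ) ^ (i - 1) * itIntegral (prefRev f i) * itIntegral (suff f m i)
        = (-1 : ℝ) ^ (i - 1) * ((fun p => PKI m p (fun k : Fin m => f ((k : ℕ) + 1))) (i - 1)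
            + (fun p => PKI m p (fun k : Fin m => f ((k : ℕ) + 1))) i) := by
    intro i hi
    rw [Finset.mem_Icc] at hi
    have h2 : i < m := by omega
    rw [mul_assoc,
      middle m f i hi.1 h2 (prefRev_int f i (hInt i (by omega)).1) (suff_int f m i (hInt i (by omega)).2)]
  rw [hword, hrev, Finset.sum_congr rfl hkey,
    telescope (fun p => PKI m p (fun k : Fin m => f ((k : ℕ) + 1))) (m - 1)]
  have hm1 : m - 1 + 1 = m := by omega
  rw [hm1]
end

section
/- Let s_1,…,s_m and n, p be positive integers and let t ∈ [0,1). Define I_q(N) := ∫_{0<t_q<⋯<t_1<t} (dt_1/(1−t_1)) ⋯ (dt_{q−1}/(1−t_{q−1})) · (t_q^N dt_q/(1−t_q)). Then ∫_{0<t_p<⋯<t_1<t} (dt_1/(1−t_1)) ⋯ (dt_{p−1}/(1−t_{p−1})) · (ζ_n^⋆(s_1,…,s_{m−1},s_m; t_p) dt_p/(1−t_p)) = Σ_{j=1}^p (−1)^{j−1} I_{p−j+1}(0) · ζ_n^⋆(s_1,…,s_m,{1}_{j−1}) + (−1)^p ζ_n^⋆(s_1,…,s_m,{1}_p; t). -/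
open MeasureTheory

/-- Parametric multiple harmonic star sum
`ζ_n^⋆(s₁,…,s_m; x) = ∑_{n ≥ n₁ ≥ ⋯ ≥ n_m ≥ 1} x^{n_m} / (n₁^{s₁} ⋯ n_m^{s_m})`,
with `ζ_n^⋆(∅; x) = x^n`; the unparametrized star sum is obtained at `x = 1`. -/
noncomputable def pStar : List ℕ → ℕ → ℝ → ℝ
  | [], n, x => x ^ n
  | s :: rest, n, x => ∑ k ∈ Finset.Icc 1 n, 1 / (k : ℝ) ^ s * pStar rest k x

/-- `I_q(N) = ∫_{0<t_q<⋯<t₁<t} dt₁/(1-t₁) ⋯ dt_{q-1}/(1-t_{q-1}) · t_q^N dt_q/(1-t_q)`. -/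
noncomputable def Iq (q N : ℕ) (t : ℝ) : ℝ :=
  itIntegralTo
    (List.replicate (q - 1) (fun u : ℝ => 1 / (1 - u)) ++ [fun u : ℝ => u ^ N / (1 - u)]) t

open Set

lemma itIntegralTo_nil (t : ℝ) : itIntegralTo [] t = 1 := by
  have h : simplexTo 0 t = Set.univ := by
    ext u
    simp only [simplexTo, Set.mem_setOf_eq, Set.mem_univ, iff_true]
    exact ⟨fun i => i.elim0, fun i => i.elim0⟩
  have hv : (volume : Measure (Fin 0 → ℝ)) Set.univ = 1 := by
    rw [volume_pi, ← Set.pi_univ Set.univ, Measure.pi_pi]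
    simp
  simp [itIntegralTo, h, hv, Measure.real]

lemma measurableSet_simplexTo (N : ℕ) (t : ℝ) : MeasurableSet (simplexTo N t) := by
  have h1 : MeasurableSet {u : Fin N → ℝ | ∀ i, 0 < u i ∧ u i < t} := by
    rw [Set.setOf_forall]
    exact MeasurableSet.iInter fun i =>
      (measurableSet_lt measurable_const (measurable_pi_apply i)).inter
        (measurableSet_lt (measurable_pi_apply i) measurable_const)
  have h2 : MeasurableSet {u : Fin N → ℝ | ∀ i j : Fin N, i < j → u j < u i} := by
    rw [Set.setOf_forall]
    refine MeasurableSet.iInter fun i => ?_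
    rw [Set.setOf_forall]
    refine MeasurableSet.iInter fun j => ?_
    by_cases hij : i < j
    · simp only [hij, true_implies]
      exact measurableSet_lt (measurable_pi_apply j) (measurable_pi_apply i)
    · simp only [hij, false_implies, Set.setOf_true]
      exact MeasurableSet.univ
  exact h1.inter h2

lemma simplexTo_subset_pi (N : ℕ) (t : ℝ) :
    simplexTo N t ⊆ Set.univ.pi (fun _ : Fin N => Ioo 0 t) := by
  intro u hu
  intro i _
  exact hu.1 i

lemma volume_simplexTo_lt_top (N : ℕ) (t : ℝ) : volume (simplexTo N t) < ⊤ := by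
  refine lt_of_le_of_lt (measure_mono (simplexTo_subset_pi N t)) ?_
  rw [volume_pi, Measure.pi_pi]
  exact ENNReal.prod_lt_top fun i _ => (by simp : volume (Ioo 0 t) ≠ ⊤).lt_top

lemma itIntegralTo_cons (f : ℝ → ℝ) (fs : List (ℝ → ℝ)) (t : ℝ) (ht : 0 ≤ t)
    (hmeas : ∀ g ∈ f :: fs, Measurable g)
    (hcont : ∀ g ∈ f :: fs, ContinuousOn g (Icc 0 t)) :
    itIntegralTo (f :: fs) t = ∫ x in Ioo 0 t, f x * itIntegralTo fs x := by
  classical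
  set n := fs.length with hn
  -- the product-side integrand and set
  set P : (Fin n → ℝ) → ℝ := fun v => ∏ i : Fin n, fs.get i (v i) with hP
  set g : ℝ × (Fin n → ℝ) → ℝ := fun p => f p.1 * P p.2 with hg
  set S' : Set (ℝ × (Fin n → ℝ)) := {p | p.1 ∈ Ioo 0 t ∧ p.2 ∈ simplexTo n p.1} with hS'
  set e : (Fin (n + 1) → ℝ) ≃ᵐ ℝ × (Fin n → ℝ) :=
    MeasurableEquiv.piFinSuccAbove (fun _ : Fin (n + 1) => ℝ) 0 with he
  have hmp : MeasurePreserving e volume (volume.prod volume) := by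
    have h := measurePreserving_piFinSuccAbove (fun _ : Fin (n + 1) => (volume : Measure ℝ)) 0
    rw [← volume_pi] at h
    rw [volume_pi]
    exact h
  have he0 : ∀ u : Fin (n+1) → ℝ, (e u).1 = u 0 := fun u => rfl
  have heS : ∀ u : Fin (n+1) → ℝ, (e u).2 = fun j : Fin n => u j.succ := by
    intro u; funext j
    show u ((0 : Fin (n+1)).succAbove j) = u j.succ
    rw [Fin.succAbove_zero]
  -- preimage of S' under e is the simplex
  have hpre : e ⁻¹' S' = simplexTo (n + 1) t := by
    ext u
    simp only [Set.mem_preimage, hS', Set.mem_setOf_eq, he0, heS]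
    constructor
    · rintro ⟨hx, hv⟩
      refine ⟨fun i => ?_, fun i j hij => ?_⟩
      · induction i using Fin.cases with
        | zero => exact ⟨hx.1, hx.2⟩
        | succ j => exact ⟨(hv.1 j).1, lt_trans (hv.1 j).2 hx.2⟩
      · induction j using Fin.cases with
        | zero => exact absurd hij (Fin.not_lt_zero i)
        | succ j' =>
          induction i using Fin.cases with
          | zero => exact (hv.1 j').2
          | succ i' => exact hv.2 i' j' (Fin.succ_lt_succ_iff.mp hij)
    · intro hu
      refine ⟨⟨hu.1 0 |>.1, hu.1 0 |>.2⟩, ⟨fun j => ⟨(hu.1 j.succ).1, hu.2 0 j.succ (Fin.succ_pos j)⟩,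
        fun i j hij => hu.2 i.succ j.succ (Fin.succ_lt_succ_iff.mpr hij)⟩⟩
  have hge : ∀ u : Fin (n+1) → ℝ, g (e u) = ∏ i : Fin (n+1), (f :: fs).get i (u i) := by
    intro u
    rw [Fin.prod_univ_succ]
    simp only [hg, he0, heS, hP]
    rfl
  -- measurability of S'
  have hS'meas : MeasurableSet S' := by
    have h1 : MeasurableSet {p : ℝ × (Fin n → ℝ) | p.1 ∈ Ioo 0 t} :=
      measurable_fst measurableSet_Ioo
    have h2 : MeasurableSet {p : ℝ × (Fin n → ℝ) | ∀ i, 0 < p.2 i ∧ p.2 i < p.1} := by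
      rw [Set.setOf_forall]
      exact MeasurableSet.iInter fun i =>
        (measurableSet_lt measurable_const ((measurable_pi_apply i).comp measurable_snd)).inter
          (measurableSet_lt ((measurable_pi_apply i).comp measurable_snd) measurable_fst)
    have h3 : MeasurableSet {p : ℝ × (Fin n → ℝ) | ∀ i j : Fin n, i < j → p.2 j < p.2 i} := by
      rw [Set.setOf_forall]
      refine MeasurableSet.iInter fun i => ?_
      rw [Set.setOf_forall]
      refine MeasurableSet.iInter fun j => ?_
      by_cases hij : i < j
      · simp only [hij, true_implies]
        exact measurableSet_lt (Measurable.comp' (measurable_pi_apply j) measurable_snd)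
          (Measurable.comp' (measurable_pi_apply i) measurable_snd)
      · simp [hij]
    have : S' = {p : ℝ × (Fin n → ℝ) | p.1 ∈ Ioo 0 t} ∩
        ({p | ∀ i, 0 < p.2 i ∧ p.2 i < p.1} ∩ {p | ∀ i j : Fin n, i < j → p.2 j < p.2 i}) := by
      ext p
      simp only [hS', Set.mem_setOf_eq, Set.mem_inter_iff, simplexTo]
      try tauto
    rw [this]
    exact h1.inter (h2.inter h3)
  -- measurability of the integrand
  have hPmeas : Measurable P :=
    Finset.measurable_prod _ fun i _ =>
      (hmeas _ (List.mem_cons_of_mem f (fs.get_mem i))).comp (measurable_pi_apply i)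
  have hgmeas : Measurable g :=
    ((hmeas f (List.mem_cons_self)).comp measurable_fst).mul (hPmeas.comp measurable_snd)
  -- uniform bound
  have hbdd : ∀ l : List (ℝ → ℝ), (∀ g ∈ l, ContinuousOn g (Icc 0 t)) →
      ∃ C : ℝ, 0 ≤ C ∧ ∀ gg ∈ l, ∀ x ∈ Icc 0 t, |gg x| ≤ C := by
    intro l
    induction l with
    | nil => exact fun _ => ⟨0, le_refl 0, by simp⟩
    | cons a l ih =>
      intro hl
      obtain ⟨C, hC0, hC⟩ := ih fun g hg => hl g (List.mem_cons_of_mem a hg)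
      obtain ⟨D, hD⟩ := isCompact_Icc.exists_bound_of_continuousOn
        (hl a (List.mem_cons_self))
      refine ⟨max C (max D 0), le_trans hC0 (le_max_left _ _), fun g hg x hx => ?_⟩
      rcases List.mem_cons.mp hg with rfl | hg
      · calc |g x| ≤ D := by simpa [Real.norm_eq_abs] using hD x hx
          _ ≤ max C (max D 0) := le_trans (le_max_left D 0) (le_max_right _ _)
      · exact le_trans (hC g hg x hx) (le_max_left _ _)
  obtain ⟨C, hC0, hC⟩ := hbdd (f :: fs) hcont
  -- integrability of the indicator function on the product space
  have hS'sub : S' ⊆ Ioo 0 t ×ˢ Set.univ.pi (fun _ : Fin n => Ioo 0 t) := by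
    rintro ⟨x, v⟩ ⟨hx, hv⟩
    exact ⟨hx, fun i _ => ⟨(hv.1 i).1, lt_trans (hv.1 i).2 hx.2⟩⟩
  have hS'fin : (volume.prod volume) S' ≠ ⊤ := by
    refine ne_top_of_le_ne_top ?_ (measure_mono hS'sub)
    rw [Measure.prod_prod, volume_pi, Measure.pi_pi]
    exact ENNReal.mul_ne_top (by simp)
      (ENNReal.prod_lt_top fun i _ => (by simp : volume (Ioo 0 t) ≠ ⊤).lt_top).ne
  have hbound : ∀ p ∈ S', ‖g p‖ ≤ C * C ^ n := by
    rintro ⟨x, v⟩ ⟨hx, hv⟩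
    have hxI : x ∈ Icc 0 t := ⟨le_of_lt hx.1, le_of_lt hx.2⟩
    have hvI : ∀ i, v i ∈ Icc 0 t :=
      fun i => ⟨le_of_lt (hv.1 i).1, le_of_lt (lt_trans (hv.1 i).2 hx.2)⟩
    have h1 : |f x| ≤ C := hC f (List.mem_cons_self) x hxI
    have h2 : |P v| ≤ C ^ n := by
      rw [hP]
      calc |∏ i : Fin n, fs.get i (v i)| = ∏ i : Fin n, |fs.get i (v i)| := by
            rw [Finset.abs_prod]
        _ ≤ ∏ _i : Fin n, C := Finset.prod_le_prod (fun i _ => abs_nonneg _)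
            (fun i _ => hC _ (List.mem_cons_of_mem f (fs.get_mem i)) _ (hvI i))
        _ = C ^ n := by rw [Finset.prod_const, Finset.card_univ, Fintype.card_fin]
    calc ‖g (x, v)‖ = |f x| * |P v| := by rw [hg]; simp [Real.norm_eq_abs, abs_mul]
      _ ≤ C * C ^ n := mul_le_mul h1 h2 (abs_nonneg _) hC0
  have hint : Integrable (S'.indicator g) (volume.prod volume) := by
    rw [integrable_indicator_iff hS'meas]
    refine Measure.integrableOn_of_bounded (M := C * C ^ n) hS'fin hgmeas.aestronglyMeasurable ?_
    filter_upwards [ae_restrict_mem hS'meas] with p hp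
    exact hbound p hp
  -- the main computation
  have step1 : itIntegralTo (f :: fs) t = ∫ u in e ⁻¹' S', g (e u) := by
    rw [hpre]
    refine setIntegral_congr_fun (measurableSet_simplexTo _ _) fun u _ => ?_
    exact (hge u).symm
  have step2 : (∫ u in e ⁻¹' S', g (e u)) = ∫ p in S', g p ∂(volume.prod volume) :=
    hmp.setIntegral_preimage_emb e.measurableEmbedding g S'
  have step3 : (∫ p in S', g p ∂(volume.prod volume)) =
      ∫ p, S'.indicator g p ∂(volume.prod volume) := (integral_indicator hS'meas).symm
  have hsplit : ∀ (x : ℝ) (v : Fin n → ℝ), S'.indicator g (x, v) =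
      (Ioo 0 t).indicator f x * (simplexTo n x).indicator P v := by
    intro x v
    by_cases hx : x ∈ Ioo 0 t
    · by_cases hv : v ∈ simplexTo n x
      · rw [Set.indicator_of_mem (show (x, v) ∈ S' from ⟨hx, hv⟩),
          Set.indicator_of_mem hx, Set.indicator_of_mem hv]
      · rw [Set.indicator_of_notMem (fun h => hv h.2), Set.indicator_of_notMem hv, mul_zero]
    · rw [Set.indicator_of_notMem (fun h => hx h.1), Set.indicator_of_notMem hx, zero_mul]
  have step4 : (∫ p, S'.indicator g p ∂(volume.prod volume)) =
      ∫ x : ℝ, (Ioo 0 t).indicator f x * itIntegralTo fs x := by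
    rw [MeasureTheory.integral_prod _ hint]
    refine integral_congr_ae (Filter.Eventually.of_forall fun x => ?_)
    dsimp only
    have : (∫ v, S'.indicator g (x, v)) =
        ∫ v, (Ioo 0 t).indicator f x * (simplexTo n x).indicator P v := by
      refine integral_congr_ae (Filter.Eventually.of_forall fun v => hsplit x v)
    rw [this, integral_const_mul, integral_indicator (measurableSet_simplexTo n x)]
    rfl
  have step5 : (∫ x : ℝ, (Ioo 0 t).indicator f x * itIntegralTo fs x) =
      ∫ x in Ioo 0 t, f x * itIntegralTo fs x := by
    rw [← integral_indicator measurableSet_Ioo]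
    refine integral_congr_ae (Filter.Eventually.of_forall fun x => ?_)
    dsimp only
    rw [Set.indicator_mul_left]
  rw [step1, step2, step3, step4, step5]

lemma pStar_continuous (s : List ℕ) (n : ℕ) : Continuous (fun x => pStar s n x) := by
  induction s generalizing n with
  | nil => simpa [pStar] using continuous_pow n
  | cons a rest ih =>
    simp only [pStar]
    exact continuous_finset_sum _ fun k _ => continuous_const.mul (ih k)

lemma pStar_zero (s : List ℕ) (hs : s ≠ []) (n : ℕ) : pStar s n 0 = 0 := by
  induction s generalizing n with
  | nil => exact absurd rfl hs
  | cons a rest ih =>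
    simp only [pStar]
    refine Finset.sum_eq_zero fun k hk => ?_
    have hk1 : 1 ≤ k := (Finset.mem_Icc.mp hk).1
    rcases eq_or_ne rest [] with rfl | hne
    · simp only [pStar]
      rw [zero_pow (by omega), mul_zero]
    · rw [ih hne k, mul_zero]

lemma hasDerivAt_pStar_append_one (s : List ℕ) (n : ℕ) (x : ℝ) (hx : x ≠ 1) :
    HasDerivAt (fun y => pStar (s ++ [1]) n y) ((pStar s n 1 - pStar s n x) / (1 - x)) x := by
  have h1x : 1 - x ≠ 0 := sub_ne_zero.mpr (Ne.symm hx)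
  induction s generalizing n with
  | nil =>
    have h1 : (fun y => pStar ([] ++ [1]) n y) =
        fun y => ∑ k ∈ Finset.Icc 1 n, 1 / (k : ℝ) ^ 1 * y ^ k := by
      funext y; simp [pStar]
    rw [h1]
    have hd : HasDerivAt (fun y : ℝ => ∑ k ∈ Finset.Icc 1 n, 1 / (k : ℝ) ^ 1 * y ^ k)
        (∑ k ∈ Finset.Icc 1 n, 1 / (k : ℝ) ^ 1 * (k * x ^ (k - 1))) x :=
      HasDerivAt.fun_sum fun k _ => (hasDerivAt_pow k x).const_mul _
    convert hd using 1
    have he : ∑ k ∈ Finset.Icc 1 n, 1 / (k : ℝ) ^ 1 * (k * x ^ (k - 1)) =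
        ∑ k ∈ Finset.Icc 1 n, x ^ (k - 1) := by
      refine Finset.sum_congr rfl fun k hk => ?_
      have hk1 : 1 ≤ k := (Finset.mem_Icc.mp hk).1
      have hkne : (k : ℝ) ≠ 0 := Nat.cast_ne_zero.mpr (by omega)
      field_simp
    rw [he, ← Finset.Ico_add_one_right_eq_Icc, Finset.sum_Ico_eq_sum_range]
    simp only [Nat.add_sub_cancel]
    rw [Finset.sum_congr rfl (fun i _ => show x ^ (1 + i - 1) = x ^ i by congr 1; omega),
      geom_sum_eq hx n]
    simp only [pStar, one_pow]
    rw [div_eq_div_iff h1x (sub_ne_zero.mpr hx)]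
    ring
  | cons a rest ih =>
    have h1 : (fun y => pStar ((a :: rest) ++ [1]) n y) =
        fun y => ∑ k ∈ Finset.Icc 1 n, 1 / (k : ℝ) ^ a * pStar (rest ++ [1]) k y := by
      funext y; simp [pStar]
    rw [h1]
    have hd := HasDerivAt.fun_sum (fun k (_ : k ∈ Finset.Icc 1 n) => (ih k).const_mul (1 / (k : ℝ) ^ a))
    convert hd using 1
    · rfl
    · rfl
    simp only [pStar]
    rw [← Finset.sum_sub_distrib, Finset.sum_div]
    exact Finset.sum_congr rfl fun k _ => by ring

noncomputable def ell (t : ℝ) : ℝ := -Real.log (1 - t)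

lemma ell_zero : ell 0 = 0 := by simp [ell]

lemma hasDerivAt_ell {x : ℝ} (hx : x < 1) : HasDerivAt ell (1 - x)⁻¹ x := by
  have h1x : (1 : ℝ) - x ≠ 0 := by linarith
  have h : HasDerivAt (fun t : ℝ => 1 - t) (-1) x := (hasDerivAt_id x).const_sub 1
  have h2 := ((Real.hasDerivAt_log h1x).comp x h).neg
  convert h2 using 1
  · rfl
  · rfl
  · rfl
  ring

lemma continuousOn_ell {t : ℝ} (ht : t < 1) : ContinuousOn ell (Set.Icc 0 t) := by
  unfold ell
  refine ContinuousOn.neg (ContinuousOn.log ((continuous_const.sub continuous_id').continuousOn)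
    fun x hx => ?_)
  have hx1 : x < 1 := lt_of_le_of_lt hx.2 ht
  exact sub_ne_zero.mpr (ne_of_gt (by linarith))

open Nat in
lemma hasDerivAt_ellpow (q : ℕ) {x : ℝ} (hx : x < 1) :
    HasDerivAt (fun t => ell t ^ (q + 1) / ((q + 1)! : ℝ)) (ell x ^ q / (q ! : ℝ) * (1 - x)⁻¹) x := by
  have h := ((hasDerivAt_ell hx).pow (q + 1)).div_const ((q + 1)! : ℝ)
  convert h using 1
  · rfl
  · rfl
  · rfl
  have h2 : (q ! : ℝ) ≠ 0 := Nat.cast_ne_zero.mpr (Nat.factorial_ne_zero _)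
  have h3 : ((q : ℝ) + 1) ≠ 0 := by positivity
  rw [Nat.add_sub_cancel, Nat.factorial_succ]
  generalize (1 - x)⁻¹ = y
  push_cast
  field_simp

lemma integral_Ioo_eq (F F' : ℝ → ℝ) {t : ℝ} (ht0 : 0 ≤ t)
    (hF : ∀ x ∈ Set.Icc 0 t, HasDerivAt F (F' x) x) (hF' : ContinuousOn F' (Set.Icc 0 t)) :
    ∫ x in Ioo 0 t, F' x = F t - F 0 := by
  rw [← integral_Ioc_eq_integral_Ioo, ← intervalIntegral.integral_of_le ht0]
  refine intervalIntegral.integral_eq_sub_of_hasDerivAt (fun x hx => ?_) ?_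
  · exact hF x (by rwa [Set.uIcc_of_le ht0] at hx)
  · exact (by rwa [Set.uIcc_of_le ht0] : ContinuousOn F' (Set.uIcc 0 t)).intervalIntegrable

lemma measurable_hfun : Measurable (fun u : ℝ => 1 / (1 - u)) :=
  measurable_const.div (measurable_const.sub measurable_id)

lemma continuousOn_hfun {t : ℝ} (ht : t < 1) :
    ContinuousOn (fun u : ℝ => 1 / (1 - u)) (Set.Icc 0 t) := by
  refine ContinuousOn.div continuousOn_const
    ((continuous_const.sub continuous_id').continuousOn) fun x hx => ?_
  exact sub_ne_zero.mpr (ne_of_lt (lt_of_le_of_lt hx.2 ht)).symm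

lemma measurable_gfun (s : List ℕ) (n : ℕ) :
    Measurable (fun u : ℝ => pStar s n u / (1 - u)) :=
  (pStar_continuous s n).measurable.div (measurable_const.sub measurable_id)

lemma continuousOn_gfun (s : List ℕ) (n : ℕ) {t : ℝ} (ht : t < 1) :
    ContinuousOn (fun u : ℝ => pStar s n u / (1 - u)) (Set.Icc 0 t) := by
  refine ContinuousOn.div (pStar_continuous s n).continuousOn
    ((continuous_const.sub continuous_id').continuousOn) fun x hx => ?_
  exact sub_ne_zero.mpr (ne_of_lt (lt_of_le_of_lt hx.2 ht)).symm

lemma L_replicate : ∀ (q : ℕ) {t : ℝ}, 0 ≤ t → t < 1 →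
    itIntegralTo (List.replicate q (fun u : ℝ => 1 / (1 - u))) t = ell t ^ q / (q.factorial : ℝ) := by
  intro q
  induction q with
  | zero =>
    intro t h0 h1
    simp [itIntegralTo_nil]
  | succ q ih =>
    intro t h0 h1
    have hmem : ∀ g ∈ (fun u : ℝ => 1 / (1 - u)) ::
        List.replicate q (fun u : ℝ => 1 / (1 - u)), Measurable g := by
      intro g hg
      rcases List.mem_cons.mp hg with rfl | hg
      · exact measurable_hfun
      · rw [List.eq_of_mem_replicate hg]; exact measurable_hfun
    have hmemc : ∀ g ∈ (fun u : ℝ => 1 / (1 - u)) ::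
        List.replicate q (fun u : ℝ => 1 / (1 - u)), ContinuousOn g (Set.Icc 0 t) := by
      intro g hg
      rcases List.mem_cons.mp hg with rfl | hg
      · exact continuousOn_hfun h1
      · rw [List.eq_of_mem_replicate hg]; exact continuousOn_hfun h1
    rw [List.replicate_succ, itIntegralTo_cons _ _ t h0 hmem hmemc]
    rw [setIntegral_congr_fun measurableSet_Ioo
      (show Set.EqOn _ (fun x => 1 / (1 - x) * (ell x ^ q / (q.factorial : ℝ))) (Ioo 0 t) from
        fun x hx => by rw [ih (le_of_lt hx.1) (lt_trans hx.2 h1)])]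
    rw [integral_Ioo_eq (fun τ => ell τ ^ (q + 1) / ((q + 1).factorial : ℝ)) _ h0 ?_ ?_]
    · rw [ell_zero, zero_pow (by omega), zero_div, sub_zero]
    · intro x hx
      have hx1 : x < 1 := lt_of_le_of_lt hx.2 h1
      have := hasDerivAt_ellpow q hx1
      convert this using 1
      rw [one_div]
      ring
    · exact (continuousOn_hfun h1).mul (((continuousOn_ell h1).pow q).div_const _)

lemma Iq_eq (q : ℕ) (hq : 1 ≤ q) {t : ℝ} (h0 : 0 ≤ t) (h1 : t < 1) :
    Iq q 0 t = ell t ^ q / (q.factorial : ℝ) := by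
  have hfun : (fun u : ℝ => u ^ 0 / (1 - u)) = fun u : ℝ => 1 / (1 - u) := by
    funext u; rw [pow_zero]
  have h2 : List.replicate (q - 1) (fun u : ℝ => 1 / (1 - u)) ++ [fun u : ℝ => 1 / (1 - u)] =
      List.replicate q (fun u : ℝ => 1 / (1 - u)) := by
    rw [← List.replicate_succ']
    congr 1
    omega
  rw [Iq, hfun, h2, L_replicate q h0 h1]

lemma main_aux (s : List ℕ) (n : ℕ) :
    ∀ (m : ℕ) {t : ℝ}, 0 ≤ t → t < 1 →
    itIntegralTo (List.replicate m (fun u : ℝ => 1 / (1 - u)) ++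
        [fun u : ℝ => pStar s n u / (1 - u)]) t =
      (∑ i ∈ Finset.range (m + 1), (-1 : ℝ) ^ i *
          (ell t ^ (m + 1 - i) / ((m + 1 - i).factorial : ℝ)) *
          pStar (s ++ List.replicate i 1) n 1) +
        (-1 : ℝ) ^ (m + 1) * pStar (s ++ List.replicate (m + 1) 1) n t := by
  intro m
  induction m with
  | zero =>
    intro t h0 h1
    have hmem : ∀ g ∈ [fun u : ℝ => pStar s n u / (1 - u)], Measurable g := by
      intro g hg
      rw [List.mem_singleton.mp hg]
      exact measurable_gfun s n
    have hmemc : ∀ g ∈ [fun u : ℝ => pStar s n u / (1 - u)], ContinuousOn g (Set.Icc 0 t) := by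
      intro g hg
      rw [List.mem_singleton.mp hg]
      exact continuousOn_gfun s n h1
    rw [List.replicate_zero, List.nil_append, itIntegralTo_cons _ _ t h0 hmem hmemc]
    rw [setIntegral_congr_fun measurableSet_Ioo
      (show Set.EqOn _ (fun x => pStar s n x / (1 - x)) (Ioo 0 t) from
        fun x _ => by simp [itIntegralTo_nil])]
    rw [integral_Ioo_eq (fun τ => ell τ * pStar s n 1 - pStar (s ++ [1]) n τ) _ h0 ?_ ?_]
    · rw [ell_zero, zero_mul, pStar_zero (s ++ [1]) (by simp) n]
      simp [Finset.sum_range_one]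
      ring
    · intro x hx
      have hx1 : x < 1 := lt_of_le_of_lt hx.2 h1
      have h1x : (1 : ℝ) - x ≠ 0 := sub_ne_zero.mpr (ne_of_lt hx1).symm
      have hd := ((hasDerivAt_ell hx1).mul_const (pStar s n 1)).sub
        (hasDerivAt_pStar_append_one s n x (ne_of_lt hx1))
      convert hd using 1
      · rfl
      · rfl
      · funext y; simp only [Pi.sub_apply]
      field_simp
      ring
    · exact continuousOn_gfun s n h1
  | succ m ih =>
    intro t h0 h1
    have hmem : ∀ g' ∈ (fun u : ℝ => 1 / (1 - u)) ::
        (List.replicate m (fun u : ℝ => 1 / (1 - u)) ++ [fun u : ℝ => pStar s n u / (1 - u)]),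
        Measurable g' := by
      intro g' hg'
      rcases List.mem_cons.mp hg' with rfl | hg'
      · exact measurable_hfun
      rcases List.mem_append.mp hg' with hg' | hg'
      · rw [List.eq_of_mem_replicate hg']; exact measurable_hfun
      · rw [List.mem_singleton.mp hg']; exact measurable_gfun s n
    have hmemc : ∀ g' ∈ (fun u : ℝ => 1 / (1 - u)) ::
        (List.replicate m (fun u : ℝ => 1 / (1 - u)) ++ [fun u : ℝ => pStar s n u / (1 - u)]),
        ContinuousOn g' (Set.Icc 0 t) := by
      intro g' hg'
      rcases List.mem_cons.mp hg' with rfl | hg'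
      · exact continuousOn_hfun h1
      rcases List.mem_append.mp hg' with hg' | hg'
      · rw [List.eq_of_mem_replicate hg']; exact continuousOn_hfun h1
      · rw [List.mem_singleton.mp hg']; exact continuousOn_gfun s n h1
    rw [List.replicate_succ, List.cons_append, itIntegralTo_cons _ _ t h0 hmem hmemc]
    rw [setIntegral_congr_fun measurableSet_Ioo
      (show Set.EqOn _ (fun x => 1 / (1 - x) *
        ((∑ i ∈ Finset.range (m + 1), (-1 : ℝ) ^ i *
          (ell x ^ (m + 1 - i) / ((m + 1 - i).factorial : ℝ)) *
          pStar (s ++ List.replicate i 1) n 1) +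
          (-1 : ℝ) ^ (m + 1) * pStar (s ++ List.replicate (m + 1) 1) n x)) (Ioo 0 t) from
        fun x hx => by rw [ih (le_of_lt hx.1) (lt_trans hx.2 h1)])]
    rw [integral_Ioo_eq (fun τ =>
        (∑ i ∈ Finset.range (m + 1 + 1), (-1 : ℝ) ^ i *
          (ell τ ^ (m + 1 + 1 - i) / ((m + 1 + 1 - i).factorial : ℝ)) *
          pStar (s ++ List.replicate i 1) n 1) +
        (-1 : ℝ) ^ (m + 1 + 1) * pStar (s ++ List.replicate (m + 1 + 1) 1) n τ) _ h0 ?_ ?_]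
    · have hF0sum : ∑ i ∈ Finset.range (m + 1 + 1), (-1 : ℝ) ^ i *
          (ell 0 ^ (m + 1 + 1 - i) / ((m + 1 + 1 - i).factorial : ℝ)) *
          pStar (s ++ List.replicate i 1) n 1 = 0 := by
        refine Finset.sum_eq_zero fun i hi => ?_
        have hi' : i < m + 1 + 1 := Finset.mem_range.mp hi
        rw [ell_zero, zero_pow (by omega), zero_div, mul_zero, zero_mul]
      rw [hF0sum, pStar_zero (s ++ List.replicate (m + 1 + 1) 1) (by simp) n,
        mul_zero, add_zero, sub_zero]
    · intro x hx
      have hx1 : x < 1 := lt_of_le_of_lt hx.2 h1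
      have h1x : (1 : ℝ) - x ≠ 0 := sub_ne_zero.mpr (ne_of_lt hx1).symm
      have hsum : HasDerivAt (fun τ => ∑ i ∈ Finset.range (m + 1 + 1), (-1 : ℝ) ^ i *
            (ell τ ^ (m + 1 + 1 - i) / ((m + 1 + 1 - i).factorial : ℝ)) *
            pStar (s ++ List.replicate i 1) n 1)
          (∑ i ∈ Finset.range (m + 1 + 1), (-1 : ℝ) ^ i *
            (ell x ^ (m + 1 - i) / ((m + 1 - i).factorial : ℝ) * (1 - x)⁻¹) *
            pStar (s ++ List.replicate i 1) n 1) x := by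
        refine HasDerivAt.fun_sum fun i hi => ?_
        have hi' : i < m + 1 + 1 := Finset.mem_range.mp hi
        rw [show m + 1 + 1 - i = (m + 1 - i) + 1 from by omega]
        exact ((hasDerivAt_ellpow (m + 1 - i) hx1).const_mul ((-1 : ℝ) ^ i)).mul_const _
      have hlist : (s ++ List.replicate (m + 1) 1) ++ [1] = s ++ List.replicate (m + 1 + 1) 1 := by
        rw [List.append_assoc, ← List.replicate_succ']
      have hP := (hasDerivAt_pStar_append_one (s ++ List.replicate (m + 1) 1) n x
        (ne_of_lt hx1)).const_mul ((-1 : ℝ) ^ (m + 1 + 1))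
      rw [hlist] at hP
      have hD := hsum.add hP
      convert hD using 1
      · rfl
      · rfl
      · rfl
      conv_rhs => rw [Finset.sum_range_succ]
      have hS : ∑ i ∈ Finset.range (m + 1), (-1 : ℝ) ^ i *
          (ell x ^ (m + 1 - i) / ((m + 1 - i).factorial : ℝ) * (1 - x)⁻¹) *
          pStar (s ++ List.replicate i 1) n 1 =
          (∑ i ∈ Finset.range (m + 1), (-1 : ℝ) ^ i *
          (ell x ^ (m + 1 - i) / ((m + 1 - i).factorial : ℝ)) *
          pStar (s ++ List.replicate i 1) n 1) * (1 - x)⁻¹ := by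
        rw [Finset.sum_mul]
        exact Finset.sum_congr rfl fun i _ => by ring
      rw [hS, Nat.sub_self]
      simp only [pow_zero, Nat.factorial_zero, Nat.cast_one, pow_succ]
      field_simp
      ring
    · refine (continuousOn_hfun h1).mul (ContinuousOn.add
        (continuousOn_finset_sum _ fun i _ => ?_)
        (continuousOn_const.mul (pStar_continuous _ n).continuousOn))
      exact (continuousOn_const.mul
        (((continuousOn_ell h1).pow _).div_const _)).mul continuousOn_const

theorem stmt6 (s : List ℕ) (hs : s ≠ []) (hpos : ∀ x ∈ s, 1 ≤ x)
    (n : ℕ) (hn : 1 ≤ n) (p : ℕ) (hp : 1 ≤ p) (t : ℝ) (ht : 0 ≤ t ∧ t < 1) :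
    itIntegralTo
        (List.replicate (p - 1) (fun u : ℝ => 1 / (1 - u)) ++
          [fun u : ℝ => pStar s n u / (1 - u)]) t =
      (∑ j ∈ Finset.Icc 1 p, (-1 : ℝ) ^ (j - 1) * Iq (p - j + 1) 0 t *
        pStar (s ++ List.replicate (j - 1) 1) n 1) +
      (-1 : ℝ) ^ p * pStar (s ++ List.replicate p 1) n t := by
  obtain ⟨m, rfl⟩ : ∃ m, p = m + 1 := ⟨p - 1, by omega⟩
  rw [show m + 1 - 1 = m from rfl]
  rw [main_aux s n m ht.1 ht.2]
  congr 1
  rw [← Finset.Ico_add_one_right_eq_Icc, Finset.sum_Ico_eq_sum_range,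
    show m + 1 + 1 - 1 = m + 1 from rfl]
  refine Finset.sum_congr rfl fun i hi => ?_
  have hi' : i < m + 1 := Finset.mem_range.mp hi
  rw [show 1 + i - 1 = i from by omega, show m + 1 - (1 + i) + 1 = m + 1 - i from by omega]
  rw [Iq_eq (m + 1 - i) (by omega) ht.1 ht.2]
end

section
/- The following two linear relations among (alternating) multiple zeta values hold: (i) 6 ζ(3,1,1) + 2 ζ(2,2,1) + ζ(2,1,2) = ζ(2,2,1) + ζ(2,1,2) + ζ(2,3) + ζ(4,1); (ii) 2 ζ(3, 1̄, 1) + 2 ζ(3̄, 1̄, 1̄) + 2 ζ(3̄, 1, 1̄) + ζ(2̄, 2̄, 1̄) + ζ(2̄, 2, 1̄) + ζ(2̄, 1, 2̄) = ζ(2̄, 1, 2) + ζ(2̄, 2, 1) + ζ(2̄, 3) + ζ(4̄, 1). -/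
/-- The `n`-th term `sgn(s)^n / n^{|s|}` of an alternating harmonic series,
where a negative entry `s` encodes a "barred" exponent `|s|` with sign `-1`. -/
noncomputable def zTerm (s : ℤ) (n : ℕ) : ℝ :=
  (if s < 0 then (-1 : ℝ) else 1) ^ n / (n : ℝ) ^ s.natAbs

/-- Alternating multiple harmonic sum
`ζ_n(s₁,…,s_r) = ∑_{n ≥ n₁ > ⋯ > n_r ≥ 1} ∏ sgn(s_j)^{n_j} / n_j^{|s_j|}`. -/
noncomputable def amhs : List ℤ → ℕ → ℝ
  | [], _ => 1
  | s :: rest, n => ∑ k ∈ Finset.Icc 1 n, zTerm s k * amhs rest (k - 1)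

/-- Alternating multiple zeta value `ζ(s₁,…,s_r)`, as the limit of its partial sums. -/
noncomputable def azeta (s : List ℤ) : ℝ := Filter.limUnder Filter.atTop (amhs s)


open Finset

/-! ### Basic layer -/

noncomputable def E1 (ε : ℝ) (e : ℕ) (j : ℕ) : ℝ := ∑ m ∈ Icc 1 j, ε ^ m / (m : ℝ) ^ e

noncomputable def E2 (ε δ : ℝ) (e f : ℕ) (j : ℕ) : ℝ :=
  ∑ m ∈ Icc 1 j, ε ^ m / (m : ℝ) ^ e * E1 δ f (m - 1)

noncomputable def E3 (ε δ γ : ℝ) (e f g : ℕ) (j : ℕ) : ℝ :=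
  ∑ m ∈ Icc 1 j, ε ^ m / (m : ℝ) ^ e * E2 δ γ f g (m - 1)

noncomputable def sg (s : ℤ) : ℝ := if s < 0 then -1 else 1

lemma zTerm_eq (s : ℤ) (k : ℕ) : zTerm s k = sg s ^ k / (k : ℝ) ^ s.natAbs := rfl

lemma amhs_E1 (s : ℤ) (j : ℕ) : amhs [s] j = E1 (sg s) s.natAbs j := by
  simp [amhs, E1, zTerm_eq]

lemma amhs_E2 (s t : ℤ) (j : ℕ) :
    amhs [s, t] j = E2 (sg s) (sg t) s.natAbs t.natAbs j := by
  simp [amhs, E2, zTerm_eq, amhs_E1]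
  rfl

lemma amhs_E3 (s t u : ℤ) (j : ℕ) :
    amhs [s, t, u] j = E3 (sg s) (sg t) (sg u) s.natAbs t.natAbs u.natAbs j := by
  show (∑ k ∈ Icc 1 j, zTerm s k * amhs [t, u] (k - 1)) = _
  unfold E3
  exact Finset.sum_congr rfl fun k _ => by rw [amhs_E2, zTerm_eq]

lemma amhs_nil (n : ℕ) : amhs [] n = 1 := rfl

lemma amhs_zero (s : ℤ) (r : List ℤ) : amhs (s :: r) 0 = 0 := by simp [amhs]

lemma amhs_succ (s : ℤ) (r : List ℤ) (n : ℕ) :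
    amhs (s :: r) (n + 1) = amhs (s :: r) n + zTerm s (n + 1) * amhs r n := by
  show (∑ k ∈ Icc 1 (n+1), zTerm s k * amhs r (k-1)) = _
  rw [Finset.sum_Icc_succ_top (by omega)]
  simp [amhs]

/-! ### Combinatorial layer -/

lemma Icc_pred_eq_Ico (k : ℕ) : Icc 1 (k - 1) = Ico 1 k := by
  ext x; simp only [mem_Icc, mem_Ico]; omega

lemma sum_reflect01 (f : ℕ → ℝ) (n : ℕ) :
    ∑ m ∈ Ico 1 n, f (n - m) = ∑ m ∈ Ico 1 n, f m := by
  refine Finset.sum_nbij' (fun m => n - m) (fun m => n - m) ?_ ?_ ?_ ?_ ?_ <;>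
    intro a ha <;> simp only [mem_Ico] at ha ⊢ <;> try omega

lemma epow_self (ε : ℝ) (hε : ε ^ 2 = 1) (m : ℕ) : ε ^ m * ε ^ m = 1 := by
  rw [← pow_add, ← two_mul, pow_mul, hε, one_pow]

lemma epow_sub (ε : ℝ) (hε : ε ^ 2 = 1) {m k : ℕ} (h : m ≤ k) :
    ε ^ (k - m) = ε ^ k * ε ^ m := by
  have h1 : ε ^ (k - m) * (ε ^ m * ε ^ m) = ε ^ k * ε ^ m := by
    rw [← mul_assoc, ← pow_add, Nat.sub_add_cancel h]
  rwa [epow_self ε hε, mul_one] at h1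

lemma cast_sub_cast {m n : ℕ} (h : m ≤ n) : ((n - m : ℕ) : ℝ) = (n : ℝ) - m := by
  push_cast [h]; ring

lemma key_reflect (ε : ℝ) (hε : ε ^ 2 = 1) (k : ℕ) (G : ℕ → ℝ) :
    ∑ m ∈ Ico 1 k, ε ^ m * G (k - m) = ε ^ k * ∑ m ∈ Ico 1 k, ε ^ m * G m := by
  have key : ∑ m ∈ Ico 1 k, ε ^ (k - m) * G (k - m) = ∑ m ∈ Ico 1 k, ε ^ m * G m :=
    sum_reflect01 (fun j => ε ^ j * G j) k
  rw [← key, Finset.mul_sum]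
  refine Finset.sum_congr rfl fun m hm => ?_
  simp only [mem_Ico] at hm
  rw [epow_sub ε hε (le_of_lt hm.2)]
  have h3 := epow_self ε hε k
  linear_combination (-(ε ^ m * G (k - m))) * h3

lemma E1_Ico (ε : ℝ) (e : ℕ) (k : ℕ) :
    E1 ε e (k - 1) = ∑ m ∈ Ico 1 k, ε ^ m / (m : ℝ) ^ e := by
  rw [E1, Icc_pred_eq_Ico]

lemma E1_Ico_one (ε : ℝ) (k : ℕ) :
    E1 ε 1 (k - 1) = ∑ m ∈ Ico 1 k, ε ^ m / (m : ℝ) := by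
  rw [E1_Ico]; exact Finset.sum_congr rfl fun m _ => by rw [pow_one]

lemma perk1 (ε : ℝ) (hε : ε ^ 2 = 1) (k : ℕ) :
    ∑ m ∈ Ico 1 k, ε ^ m / ((m : ℝ) * ((k - m : ℕ) : ℝ))
      = E1 ε 1 (k - 1) / k + ε ^ k * E1 ε 1 (k - 1) / k := by
  rcases Nat.eq_zero_or_pos k with rfl | hk
  · simp [E1]
  have hkR : (k : ℝ) ≠ 0 := Nat.cast_ne_zero.mpr (by omega)
  have h1 : ∀ m ∈ Ico 1 k, ε ^ m / ((m : ℝ) * ((k - m : ℕ) : ℝ))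
      = ε ^ m / (m : ℝ) / k + ε ^ m * (1 / ((k - m : ℕ) : ℝ)) / k := by
    intro m hm; simp only [mem_Ico] at hm
    have hm0 : ((m : ℝ)) ≠ 0 := Nat.cast_ne_zero.mpr (by omega)
    have hb0 : (((k - m : ℕ)) : ℝ) ≠ 0 := Nat.cast_ne_zero.mpr (by omega)
    field_simp
    rw [cast_sub_cast (by omega : m ≤ k)]
    ring
  rw [Finset.sum_congr rfl h1, Finset.sum_add_distrib, ← Finset.sum_div, ← Finset.sum_div]
  have KR := key_reflect ε hε k (fun j => 1 / (j : ℝ))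
  rw [KR, E1_Ico_one]
  have h2 : (∑ m ∈ Ico 1 k, ε ^ m * (1 / (m : ℝ))) = ∑ m ∈ Ico 1 k, ε ^ m / (m : ℝ) :=
    Finset.sum_congr rfl fun m _ => mul_one_div _ _
  rw [h2]

lemma perk2 (ε : ℝ) (hε : ε ^ 2 = 1) (k : ℕ) :
    ∑ m ∈ Ico 1 k, ε ^ m / ((m : ℝ) ^ 2 * ((k - m : ℕ) : ℝ))
      = E1 ε 2 (k - 1) / k + E1 ε 1 (k - 1) / (k : ℝ) ^ 2
        + ε ^ k * E1 ε 1 (k - 1) / (k : ℝ) ^ 2 := by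
  rcases Nat.eq_zero_or_pos k with rfl | hk
  · simp [E1]
  have hkR : (k : ℝ) ≠ 0 := Nat.cast_ne_zero.mpr (by omega)
  have h1 : ∀ m ∈ Ico 1 k, ε ^ m / ((m : ℝ) ^ 2 * ((k - m : ℕ) : ℝ))
      = ε ^ m / (m : ℝ) ^ 2 / k + ε ^ m / (m : ℝ) / (k : ℝ) ^ 2
        + ε ^ m * (1 / ((k - m : ℕ) : ℝ)) / (k : ℝ) ^ 2 := by
    intro m hm; simp only [mem_Ico] at hm
    have hm0 : ((m : ℝ)) ≠ 0 := Nat.cast_ne_zero.mpr (by omega)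
    have hb0 : (((k - m : ℕ)) : ℝ) ≠ 0 := Nat.cast_ne_zero.mpr (by omega)
    field_simp
    rw [cast_sub_cast (by omega : m ≤ k)]
    ring
  rw [Finset.sum_congr rfl h1, Finset.sum_add_distrib, Finset.sum_add_distrib,
    ← Finset.sum_div, ← Finset.sum_div, ← Finset.sum_div]
  have KR := key_reflect ε hε k (fun j => 1 / (j : ℝ))
  rw [KR, E1_Ico_one, ← E1_Ico]
  have h2 : (∑ m ∈ Ico 1 k, ε ^ m * (1 / (m : ℝ))) = ∑ m ∈ Ico 1 k, ε ^ m / (m : ℝ) :=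
    Finset.sum_congr rfl fun m _ => mul_one_div _ _
  rw [h2, ← E1_Ico_one]

lemma E1_succ (ε : ℝ) (e j : ℕ) :
    E1 ε e (j + 1) = E1 ε e j + ε ^ (j + 1) / ((j + 1 : ℕ) : ℝ) ^ e := by
  rw [E1, Finset.sum_Icc_succ_top (by omega), ← E1]

lemma E2_succ (ε δ : ℝ) (e f j : ℕ) :
    E2 ε δ e f (j + 1) = E2 ε δ e f j + ε ^ (j + 1) / ((j + 1 : ℕ) : ℝ) ^ e * E1 δ f j := by
  rw [E2, Finset.sum_Icc_succ_top (by omega), ← E2, Nat.add_sub_cancel]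

lemma E3_succ (ε δ γ : ℝ) (e f g j : ℕ) :
    E3 ε δ γ e f g (j + 1)
      = E3 ε δ γ e f g j + ε ^ (j + 1) / ((j + 1 : ℕ) : ℝ) ^ e * E2 δ γ f g j := by
  rw [E3, Finset.sum_Icc_succ_top (by omega), ← E3, Nat.add_sub_cancel]

lemma Ico_succ_eq_Icc (K : ℕ) : Ico 1 (K + 1) = Icc 1 K := by
  ext x; simp [Nat.lt_succ_iff]

lemma SQ1 (ε : ℝ) (hε : ε ^ 2 = 1) (K : ℕ) :
    ∑ m ∈ Icc 1 K, ε ^ m / (m : ℝ) * E1 1 1 (K - m)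
      = E2 1 ε 1 1 K + E2 ε ε 1 1 K := by
  induction K with
  | zero => simp [E2]
  | succ K ih =>
    rw [Finset.sum_Icc_succ_top (by omega : 1 ≤ K + 1)]
    have hsplit : ∀ m ∈ Icc 1 K, ε ^ m / (m : ℝ) * E1 1 1 (K + 1 - m)
        = ε ^ m / (m : ℝ) * E1 1 1 (K - m)
          + ε ^ m / ((m : ℝ) * ((K + 1 - m : ℕ) : ℝ)) := by
      intro m hm; simp only [mem_Icc] at hm
      have h4 : K + 1 - m = (K - m) + 1 := by omega
      have hc : ((K - m + 1 : ℕ) : ℝ) = ((K + 1 - m : ℕ) : ℝ) := by congr 1; omega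
      have hm0 : ((m : ℝ)) ≠ 0 := Nat.cast_ne_zero.mpr (by omega)
      have hc0 : ((K + 1 - m : ℕ) : ℝ) ≠ 0 := Nat.cast_ne_zero.mpr (by omega)
      rw [h4, E1_succ, hc, one_pow, pow_one]
      field_simp
    rw [Finset.sum_congr rfl hsplit, Finset.sum_add_distrib, ih, Nat.sub_self]
    have hp := perk1 ε hε (K + 1)
    rw [Ico_succ_eq_Icc, Nat.add_sub_cancel] at hp
    have h0 : E1 1 1 0 = 0 := by simp [E1]
    rw [hp, E2_succ, E2_succ, h0]
    simp only [one_pow, pow_one]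
    push_cast
    ring

lemma SQ2 (ε : ℝ) (hε : ε ^ 2 = 1) (K : ℕ) :
    ∑ m ∈ Icc 1 K, ε ^ m / (m : ℝ) ^ 2 * E1 1 1 (K - m)
      = E2 1 ε 1 2 K + E2 1 ε 2 1 K + E2 ε ε 2 1 K := by
  induction K with
  | zero => simp [E2]
  | succ K ih =>
    rw [Finset.sum_Icc_succ_top (by omega : 1 ≤ K + 1)]
    have hsplit : ∀ m ∈ Icc 1 K, ε ^ m / (m : ℝ) ^ 2 * E1 1 1 (K + 1 - m)
        = ε ^ m / (m : ℝ) ^ 2 * E1 1 1 (K - m)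
          + ε ^ m / ((m : ℝ) ^ 2 * ((K + 1 - m : ℕ) : ℝ)) := by
      intro m hm; simp only [mem_Icc] at hm
      have h4 : K + 1 - m = (K - m) + 1 := by omega
      have hc : ((K - m + 1 : ℕ) : ℝ) = ((K + 1 - m : ℕ) : ℝ) := by congr 1; omega
      have hm0 : ((m : ℝ)) ≠ 0 := Nat.cast_ne_zero.mpr (by omega)
      have hc0 : ((K + 1 - m : ℕ) : ℝ) ≠ 0 := Nat.cast_ne_zero.mpr (by omega)
      rw [h4, E1_succ, hc, one_pow, pow_one]
      field_simp
    rw [Finset.sum_congr rfl hsplit, Finset.sum_add_distrib, ih, Nat.sub_self]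
    have hp := perk2 ε hε (K + 1)
    rw [Ico_succ_eq_Icc, Nat.add_sub_cancel] at hp
    have h0 : E1 1 1 0 = 0 := by simp [E1]
    rw [hp, E2_succ, E2_succ, E2_succ, h0]
    simp only [one_pow, pow_one]
    push_cast
    ring

lemma pern (ε : ℝ) (hε : ε ^ 2 = 1) (n : ℕ) :
    ∑ m ∈ Ico 1 n, ε ^ (n - m) / ((m : ℝ) ^ 2 * ((n - m : ℕ) : ℝ) ^ 2) * E1 1 1 (n - m - 1)
      = ε ^ n * (E2 1 ε 1 2 (n - 1) + E2 1 ε 2 1 (n - 1) + E2 ε ε 2 1 (n - 1)) / (n : ℝ) ^ 2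
        + E2 ε 1 2 1 (n - 1) / (n : ℝ) ^ 2
        + 2 * (ε ^ n * (E2 1 ε 1 1 (n - 1) + E2 ε ε 1 1 (n - 1))) / (n : ℝ) ^ 3
        + 2 * E2 ε 1 1 1 (n - 1) / (n : ℝ) ^ 3 := by
  rcases Nat.eq_zero_or_pos n with rfl | hn
  · simp [E2]
  have hnR : (n : ℝ) ≠ 0 := Nat.cast_ne_zero.mpr (by omega)
  have hsplit : ∀ m ∈ Ico 1 n,
      ε ^ (n - m) / ((m : ℝ) ^ 2 * ((n - m : ℕ) : ℝ) ^ 2) * E1 1 1 (n - m - 1)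
        = ε ^ (n - m) / (m : ℝ) ^ 2 * E1 1 1 (n - m - 1) / (n : ℝ) ^ 2
          + ε ^ (n - m) / ((n - m : ℕ) : ℝ) ^ 2 * E1 1 1 (n - m - 1) / (n : ℝ) ^ 2
          + 2 * (ε ^ (n - m) / (m : ℝ) * E1 1 1 (n - m - 1)) / (n : ℝ) ^ 3
          + 2 * (ε ^ (n - m) / ((n - m : ℕ) : ℝ) * E1 1 1 (n - m - 1)) / (n : ℝ) ^ 3 := by
    intro m hm; simp only [mem_Ico] at hm
    have hm0 : ((m : ℝ)) ≠ 0 := Nat.cast_ne_zero.mpr (by omega)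
    have hb0 : (((n - m : ℕ)) : ℝ) ≠ 0 := Nat.cast_ne_zero.mpr (by omega)
    rw [cast_sub_cast (by omega : m ≤ n)] at hb0 ⊢
    field_simp
    ring
  have hS1 : ∑ m ∈ Ico 1 n, ε ^ (n - m) / (m : ℝ) ^ 2 * E1 1 1 (n - m - 1)
      = ε ^ n * (E2 1 ε 1 2 (n - 1) + E2 1 ε 2 1 (n - 1) + E2 ε ε 2 1 (n - 1)) := by
    have hcongr : ∀ m ∈ Ico 1 n, ε ^ (n - m) / (m : ℝ) ^ 2 * E1 1 1 (n - m - 1)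
        = ε ^ n * (ε ^ m / (m : ℝ) ^ 2 * E1 1 1 (n - 1 - m)) := by
      intro m hm; simp only [mem_Ico] at hm
      rw [epow_sub ε hε (by omega : m ≤ n),
        show n - m - 1 = n - 1 - m from by omega]
      ring
    rw [Finset.sum_congr rfl hcongr, ← Finset.mul_sum, ← Icc_pred_eq_Ico,
      SQ2 ε hε (n - 1)]
  have hS3 : ∑ m ∈ Ico 1 n, ε ^ (n - m) / (m : ℝ) * E1 1 1 (n - m - 1)
      = ε ^ n * (E2 1 ε 1 1 (n - 1) + E2 ε ε 1 1 (n - 1)) := by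
    have hcongr : ∀ m ∈ Ico 1 n, ε ^ (n - m) / (m : ℝ) * E1 1 1 (n - m - 1)
        = ε ^ n * (ε ^ m / (m : ℝ) * E1 1 1 (n - 1 - m)) := by
      intro m hm; simp only [mem_Ico] at hm
      rw [epow_sub ε hε (by omega : m ≤ n),
        show n - m - 1 = n - 1 - m from by omega]
      ring
    rw [Finset.sum_congr rfl hcongr, ← Finset.mul_sum, ← Icc_pred_eq_Ico,
      SQ1 ε hε (n - 1)]
  have hS2 : ∑ m ∈ Ico 1 n, ε ^ (n - m) / ((n - m : ℕ) : ℝ) ^ 2 * E1 1 1 (n - m - 1)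
      = E2 ε 1 2 1 (n - 1) := by
    have h := sum_reflect01 (fun j => ε ^ j / (j : ℝ) ^ 2 * E1 1 1 (j - 1)) n
    rw [h, E2, Icc_pred_eq_Ico]
  have hS4 : ∑ m ∈ Ico 1 n, ε ^ (n - m) / ((n - m : ℕ) : ℝ) * E1 1 1 (n - m - 1)
      = E2 ε 1 1 1 (n - 1) := by
    have h := sum_reflect01 (fun j => ε ^ j / (j : ℝ) * E1 1 1 (j - 1)) n
    rw [h, E2, Icc_pred_eq_Ico]
    exact Finset.sum_congr rfl fun m _ => by rw [pow_one]
  rw [Finset.sum_congr rfl hsplit, Finset.sum_add_distrib, Finset.sum_add_distrib,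
    Finset.sum_add_distrib, ← Finset.sum_div, ← Finset.sum_div, ← Finset.sum_div,
    ← Finset.sum_div, ← Finset.mul_sum, ← Finset.mul_sum, hS1, hS2, hS3, hS4]

noncomputable def cterm (ε : ℝ) (n : ℕ) : ℝ :=
  ∑ m ∈ Ico 1 n, ε ^ (n - m) / ((m : ℝ) ^ 2 * ((n - m : ℕ) : ℝ) ^ 2) * E1 1 1 (n - m - 1)

lemma MB (N : ℕ) :
    ∑ n ∈ Icc 1 N, cterm 1 n
      = 6 * E3 1 1 1 3 1 1 N + 3 * E3 1 1 1 2 2 1 N + E3 1 1 1 2 1 2 N := by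
  induction N with
  | zero => simp [E3]
  | succ N ih =>
    rw [Finset.sum_Icc_succ_top (by omega : 1 ≤ N + 1), ih, cterm,
      pern 1 (by norm_num) (N + 1), Nat.add_sub_cancel, E3_succ, E3_succ, E3_succ]
    simp only [one_pow]
    ring

lemma MB' (N : ℕ) :
    ∑ n ∈ Icc 1 N, cterm (-1) n
      = 2 * E3 1 (-1) 1 3 1 1 N + 2 * E3 (-1) 1 (-1) 3 1 1 N
        + 2 * E3 (-1) (-1) (-1) 3 1 1 N
        + E3 1 (-1) 1 2 2 1 N + E3 (-1) 1 (-1) 2 2 1 N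
        + E3 (-1) (-1) (-1) 2 2 1 N + E3 (-1) 1 (-1) 2 1 2 N := by
  induction N with
  | zero => simp [E3]
  | succ N ih =>
    rw [Finset.sum_Icc_succ_top (by omega : 1 ≤ N + 1), ih, cterm,
      pern (-1) (by norm_num) (N + 1), Nat.add_sub_cancel,
      E3_succ, E3_succ, E3_succ, E3_succ, E3_succ, E3_succ, E3_succ]
    simp only [one_pow]
    ring

/-! ### Stuffle -/

lemma stuffle2 (x y w : ℤ) (hmul : ∀ k, zTerm x k * zTerm y k = zTerm w k) (n : ℕ) :
    amhs [x] n * amhs [y] n = amhs [x, y] n + amhs [y, x] n + amhs [w] n := by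
  induction n with
  | zero => simp [amhs_zero]
  | succ n ih =>
    rw [amhs_succ, amhs_succ, amhs_succ, amhs_succ, amhs_succ]
    simp only [amhs_nil, mul_one]
    rw [← hmul (n + 1)]
    linear_combination ih

lemma stuffle3 (x y z w v : ℤ)
    (hxy : ∀ k, zTerm x k * zTerm y k = zTerm w k)
    (hxz : ∀ k, zTerm x k * zTerm z k = zTerm v k) (n : ℕ) :
    amhs [x] n * amhs [y, z] n
      = amhs [x, y, z] n + amhs [y, x, z] n + amhs [y, z, x] n
        + amhs [w, z] n + amhs [y, v] n := by
  induction n with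
  | zero => simp [amhs_zero]
  | succ n ih =>
    have hs2 := stuffle2 x z v hxz n
    rw [amhs_succ, amhs_succ, amhs_succ, amhs_succ, amhs_succ, amhs_succ, amhs_succ]
    simp only [amhs_nil, mul_one]
    rw [← hxy (n + 1)]
    linear_combination ih + zTerm y (n + 1) * hs2

lemma zt22 (k : ℕ) : zTerm 2 k * zTerm 2 k = zTerm 4 k := by
  simp only [zTerm]
  norm_num
  rw [← mul_inv, ← pow_add]

lemma zt21 (k : ℕ) : zTerm 2 k * zTerm 1 k = zTerm 3 k := by
  simp only [zTerm]
  norm_num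
  rw [← mul_inv, ← pow_succ]

lemma zt2m2 (k : ℕ) : zTerm 2 k * zTerm (-2) k = zTerm (-4) k := by
  simp only [zTerm]
  norm_num
  rw [div_eq_mul_inv, div_eq_mul_inv, ← mul_assoc, mul_comm ((k:ℝ)^2)⁻¹ ((-1:ℝ)^k),
    mul_assoc, ← mul_inv, ← pow_add]

/-! ### Analysis: bounds -/

open Filter Topology

lemma sum_inv_sqrt (m : ℕ) : ∑ k ∈ Icc 1 m, 1 / Real.sqrt k ≤ 2 * Real.sqrt m := by
  induction m with
  | zero => simp
  | succ m ih =>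
    rw [Finset.sum_Icc_succ_top (by omega)]
    have h1 : (0:ℝ) ≤ Real.sqrt m := Real.sqrt_nonneg m
    have h2 : (0:ℝ) < Real.sqrt ((m : ℝ) + 1) := Real.sqrt_pos.mpr (by positivity)
    have hsq : Real.sqrt m ^ 2 = (m : ℝ) := Real.sq_sqrt (by positivity)
    have hsq2 : Real.sqrt ((m : ℝ) + 1) ^ 2 = (m : ℝ) + 1 := Real.sq_sqrt (by positivity)
    have hcast : ((m + 1 : ℕ) : ℝ) = (m : ℝ) + 1 := by push_cast; ring
    rw [hcast]
    have key : 2 * Real.sqrt m + 1 / Real.sqrt ((m : ℝ) + 1)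
        ≤ 2 * Real.sqrt ((m : ℝ) + 1) := by
      have h4 : 1 / Real.sqrt ((m : ℝ) + 1)
          ≤ 2 * Real.sqrt ((m : ℝ) + 1) - 2 * Real.sqrt m := by
        rw [div_le_iff₀ h2]
        nlinarith [sq_nonneg (Real.sqrt m - Real.sqrt ((m : ℝ) + 1))]
      linarith
    linarith
  
lemma abs_zTerm (s : ℤ) (hs : s ≠ 0) (k : ℕ) : |zTerm s k| ≤ 1 / k := by
  rcases Nat.eq_zero_or_pos k with rfl | hk
  · have : s.natAbs ≠ 0 := Int.natAbs_ne_zero.mpr hs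
    simp [zTerm, zero_pow this]
  have hk1 : (1:ℝ) ≤ (k:ℝ) := by exact_mod_cast hk
  have hsgn : |(if s < 0 then (-1:ℝ) else 1) ^ k| = 1 := by split <;> simp
  have h1 : |zTerm s k| = 1 / (k : ℝ) ^ s.natAbs := by
    rw [zTerm, abs_div, hsgn, abs_of_nonneg (by positivity : (0:ℝ) ≤ (k:ℝ) ^ s.natAbs)]
  rw [h1]
  apply one_div_le_one_div_of_le (by positivity)
  calc (k:ℝ) = (k:ℝ) ^ 1 := (pow_one _).symm
    _ ≤ (k:ℝ) ^ s.natAbs := pow_le_pow_right₀ hk1 (by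
        have := Int.natAbs_pos.mpr hs; omega)
  
lemma abs_zTerm_sq (s : ℤ) (hs : 2 ≤ s.natAbs) (k : ℕ) : |zTerm s k| ≤ 1 / (k:ℝ) ^ 2 := by
  rcases Nat.eq_zero_or_pos k with rfl | hk
  · have : s.natAbs ≠ 0 := by omega
    simp [zTerm, zero_pow this]
  have hk1 : (1:ℝ) ≤ (k:ℝ) := by exact_mod_cast hk
  have hsgn : |(if s < 0 then (-1:ℝ) else 1) ^ k| = 1 := by split <;> simp
  have h1 : |zTerm s k| = 1 / (k : ℝ) ^ s.natAbs := by
    rw [zTerm, abs_div, hsgn, abs_of_nonneg (by positivity : (0:ℝ) ≤ (k:ℝ) ^ s.natAbs)]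
  rw [h1]
  apply one_div_le_one_div_of_le (by positivity)
  exact pow_le_pow_right₀ hk1 hs

lemma amhs_bound (r : List ℤ) (hr : ∀ x ∈ r, x ≠ 0) (m : ℕ) :
    |amhs r m| ≤ 4 ^ r.length * (Real.sqrt m + 1) := by
  induction r generalizing m with
  | nil =>
    simp only [amhs_nil, List.length_nil, pow_zero, one_mul, abs_one]
    have := Real.sqrt_nonneg (m:ℝ); linarith
  | cons s r ih =>
    have hs : s ≠ 0 := hr s (by simp)
    have hr' : ∀ x ∈ r, x ≠ 0 := fun x hx => hr x (by simp [hx])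
    have h1 : |amhs (s :: r) m| ≤ ∑ k ∈ Icc 1 m, |zTerm s k * amhs r (k - 1)| := by
      rw [show amhs (s :: r) m = ∑ k ∈ Icc 1 m, zTerm s k * amhs r (k - 1) from rfl]
      exact Finset.abs_sum_le_sum_abs _ _
    have h2 : ∀ k ∈ Icc 1 m, |zTerm s k * amhs r (k - 1)|
        ≤ 4 ^ r.length * 2 * (1 / Real.sqrt k) := by
      intro k hk; simp only [mem_Icc] at hk
      have hk1 : (1:ℝ) ≤ (k:ℝ) := by exact_mod_cast hk.1
      have hsk : (1:ℝ) ≤ Real.sqrt k := by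
        rw [show (1:ℝ) = Real.sqrt 1 from (Real.sqrt_one).symm]
        exact Real.sqrt_le_sqrt hk1
      have hsk0 : (0:ℝ) < Real.sqrt k := by linarith
      rw [abs_mul]
      have b1 := abs_zTerm s hs k
      have b2 := ih hr' (k - 1)
      have b3 : Real.sqrt (k - 1 : ℕ) ≤ Real.sqrt k :=
        Real.sqrt_le_sqrt (Nat.cast_le.mpr (Nat.sub_le k 1))
      have hb : |amhs r (k-1)| ≤ 4 ^ r.length * (Real.sqrt k + 1) := by
        refine b2.trans ?_
        have : (0:ℝ) ≤ 4 ^ r.length := by positivity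
        nlinarith
      calc |zTerm s k| * |amhs r (k - 1)|
          ≤ (1 / k) * (4 ^ r.length * (Real.sqrt k + 1)) := by
            apply mul_le_mul b1 hb (abs_nonneg _) (by positivity)
        _ ≤ 4 ^ r.length * 2 * (1 / Real.sqrt k) := by
            have h4 : Real.sqrt k * Real.sqrt k = (k:ℝ) := Real.mul_self_sqrt (by positivity)
            have h5 : (0:ℝ) ≤ 4 ^ r.length := by positivity
            have hkpos : (0:ℝ) < (k:ℝ) := by linarith
            rw [one_div_mul_eq_div, mul_one_div, div_le_div_iff₀ hkpos hsk0]
            have h7 : Real.sqrt k ≤ (k:ℝ) := by nlinarith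
            nlinarith
    calc |amhs (s :: r) m| ≤ ∑ k ∈ Icc 1 m, |zTerm s k * amhs r (k - 1)| := h1
      _ ≤ ∑ k ∈ Icc 1 m, 4 ^ r.length * 2 * (1 / Real.sqrt k) :=
          Finset.sum_le_sum h2
      _ = 4 ^ r.length * 2 * ∑ k ∈ Icc 1 m, 1 / Real.sqrt k := by
          rw [Finset.mul_sum]
      _ ≤ 4 ^ r.length * 2 * (2 * Real.sqrt m) := by
          apply mul_le_mul_of_nonneg_left (sum_inv_sqrt m) (by positivity)
      _ ≤ 4 ^ (s :: r).length * (Real.sqrt m + 1) := by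
          simp only [List.length_cons, pow_succ]
          have h5 : (0:ℝ) ≤ 4 ^ r.length := by positivity
          have : (0:ℝ) ≤ Real.sqrt m := Real.sqrt_nonneg _
          nlinarith

lemma summable_sqrt_div : Summable (fun k : ℕ => Real.sqrt k / (k : ℝ) ^ 2) := by
  have hsum := Real.summable_one_div_nat_rpow.mpr (by norm_num : (1:ℝ) < 3/2)
  apply hsum.congr
  intro k
  rcases Nat.eq_zero_or_pos k with rfl | hk
  · simp [Real.zero_rpow (by norm_num : (3:ℝ)/2 ≠ 0)]
  have hkpos : (0:ℝ) < (k:ℝ) := by exact_mod_cast hk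
  have h2 : ((k:ℝ)) ^ ((3:ℝ)/2) * Real.sqrt k = (k:ℝ) ^ 2 := by
    rw [Real.sqrt_eq_rpow, ← Real.rpow_add hkpos, ← Real.rpow_natCast (k:ℝ) 2]
    norm_num
  rw [div_eq_div_iff (by positivity : ((k:ℝ)^((3:ℝ)/2)) ≠ 0)
    (by positivity : ((k:ℝ)^2) ≠ 0), one_mul, mul_comm]
  exact h2.symm

lemma summable_term (s : ℤ) (hs : 2 ≤ s.natAbs) (r : List ℤ) (hr : ∀ x ∈ r, x ≠ 0) :
    Summable (fun k : ℕ => zTerm s k * amhs r (k - 1)) := by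
  apply Summable.of_norm_bounded (g := fun k : ℕ => 4 ^ r.length * 2 * (Real.sqrt k / (k : ℝ) ^ 2))
    (summable_sqrt_div.mul_left _)
  intro k
  rcases Nat.eq_zero_or_pos k with rfl | hk
  · have : s.natAbs ≠ 0 := by omega
    simp [zTerm, zero_pow this]
  have hk1 : (1:ℝ) ≤ (k:ℝ) := by exact_mod_cast hk
  have hsk : (1:ℝ) ≤ Real.sqrt k := by
    rw [show (1:ℝ) = Real.sqrt 1 from (Real.sqrt_one).symm]
    exact Real.sqrt_le_sqrt hk1
  have b3 : Real.sqrt (k - 1 : ℕ) ≤ Real.sqrt k :=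
    Real.sqrt_le_sqrt (Nat.cast_le.mpr (Nat.sub_le k 1))
  have hL : (0:ℝ) ≤ 4 ^ r.length := by positivity
  rw [Real.norm_eq_abs, abs_mul]
  calc |zTerm s k| * |amhs r (k - 1)|
      ≤ (1 / (k:ℝ) ^ 2) * (4 ^ r.length * (Real.sqrt (k - 1 : ℕ) + 1)) :=
        mul_le_mul (abs_zTerm_sq s hs k) (amhs_bound r hr (k - 1)) (abs_nonneg _)
          (by positivity)
    _ ≤ (1 / (k:ℝ) ^ 2) * (4 ^ r.length * (2 * Real.sqrt k)) := by
        apply mul_le_mul_of_nonneg_left _ (by positivity)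
        apply mul_le_mul_of_nonneg_left _ hL
        linarith
    _ = 4 ^ r.length * 2 * (Real.sqrt k / (k : ℝ) ^ 2) := by ring

lemma amhs_eq_partial (s : ℤ) (hs : s ≠ 0) (r : List ℤ) (n : ℕ) :
    amhs (s :: r) n = ∑ k ∈ range (n + 1), zTerm s k * amhs r (k - 1) := by
  have h0 : zTerm s 0 * amhs r (0 - 1) = 0 := by
    have : s.natAbs ≠ 0 := Int.natAbs_ne_zero.mpr hs
    simp [zTerm, zero_pow this]
  rw [Finset.sum_range_succ', h0, add_zero]
  show (∑ k ∈ Icc 1 n, zTerm s k * amhs r (k - 1)) = _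
  rw [← Ico_succ_eq_Icc, Finset.sum_Ico_eq_sum_range]
  simp only [Nat.add_sub_cancel]
  exact Finset.sum_congr rfl fun i _ => by rw [Nat.add_comm, Nat.add_sub_cancel]

lemma tendsto_amhs (s : ℤ) (hs : 2 ≤ s.natAbs) (r : List ℤ) (hr : ∀ x ∈ r, x ≠ 0) :
    Tendsto (amhs (s :: r)) atTop
      (𝓝 (∑' k : ℕ, zTerm s k * amhs r (k - 1))) := by
  have hsum := summable_term s hs r hr
  have h1 := hsum.hasSum.tendsto_sum_nat
  have h2 := h1.comp (tendsto_add_atTop_nat 1)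
  exact h2.congr fun n => (amhs_eq_partial s (by omega) r n).symm

lemma term_bound (s : ℤ) (hs : 2 ≤ s.natAbs) (r : List ℤ) (hr : ∀ x ∈ r, x ≠ 0) (k : ℕ) :
    ‖zTerm s k * amhs r (k - 1)‖ ≤ 4 ^ r.length * 2 * (Real.sqrt k / (k : ℝ) ^ 2) := by
  rcases Nat.eq_zero_or_pos k with rfl | hk
  · have : s.natAbs ≠ 0 := by omega
    simp [zTerm, zero_pow this]
  have hk1 : (1:ℝ) ≤ (k:ℝ) := by exact_mod_cast hk
  have hsk : (1:ℝ) ≤ Real.sqrt k := by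
    rw [show (1:ℝ) = Real.sqrt 1 from (Real.sqrt_one).symm]
    exact Real.sqrt_le_sqrt hk1
  have b3 : Real.sqrt (k - 1 : ℕ) ≤ Real.sqrt k :=
    Real.sqrt_le_sqrt (Nat.cast_le.mpr (Nat.sub_le k 1))
  have hL : (0:ℝ) ≤ 4 ^ r.length := by positivity
  rw [Real.norm_eq_abs, abs_mul]
  calc |zTerm s k| * |amhs r (k - 1)|
      ≤ (1 / (k:ℝ) ^ 2) * (4 ^ r.length * (Real.sqrt (k - 1 : ℕ) + 1)) :=
        mul_le_mul (abs_zTerm_sq s hs k) (amhs_bound r hr (k - 1)) (abs_nonneg _)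
          (by positivity)
    _ ≤ (1 / (k:ℝ) ^ 2) * (4 ^ r.length * (2 * Real.sqrt k)) := by
        apply mul_le_mul_of_nonneg_left _ (by positivity)
        apply mul_le_mul_of_nonneg_left _ hL
        linarith
    _ = 4 ^ r.length * 2 * (Real.sqrt k / (k : ℝ) ^ 2) := by ring

lemma summable_term_norm (s : ℤ) (hs : 2 ≤ s.natAbs) (r : List ℤ) (hr : ∀ x ∈ r, x ≠ 0) :
    Summable (fun k : ℕ => ‖zTerm s k * amhs r (k - 1)‖) :=
  Summable.of_nonneg_of_le (fun _ => norm_nonneg _) (term_bound s hs r hr)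
    (summable_sqrt_div.mul_left _)

lemma range_succ_to_Icc (f : ℕ → ℝ) (hf0 : f 0 = 0) (N : ℕ) :
    ∑ n ∈ range (N + 1), f n = ∑ n ∈ Icc 1 N, f n := by
  rw [Finset.sum_range_succ', hf0, add_zero, ← Ico_succ_eq_Icc,
    Finset.sum_Ico_eq_sum_range]
  simp only [Nat.add_sub_cancel]
  exact Finset.sum_congr rfl fun i _ => by rw [Nat.add_comm]

lemma cauchy_coeff (e : ℤ) (he : e.natAbs = 2) (n : ℕ) :
    ∑ k ∈ range (n + 1),
        (zTerm 2 k * amhs [] (k - 1)) * (zTerm e (n - k) * amhs [1] (n - k - 1))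
      = cterm (sg e) n := by
  have hu0 : (zTerm 2 0 * amhs [] (0 - 1)) * (zTerm e (n - 0) * amhs [1] (n - 0 - 1)) = 0 := by
    simp [zTerm]
  rw [range_succ_to_Icc _ hu0]
  rcases Nat.eq_zero_or_pos n with rfl | hn
  · simp [cterm]
  rw [← Ico_succ_eq_Icc, Finset.sum_Ico_succ_top (by omega : 1 ≤ n)]
  have hv0 : (zTerm 2 n * amhs [] (n - 1)) * (zTerm e (n - n) * amhs [1] (n - n - 1)) = 0 := by
    have : e.natAbs ≠ 0 := by omega
    simp [Nat.sub_self, zTerm, zero_pow this]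
  rw [hv0, add_zero, cterm]
  refine Finset.sum_congr rfl fun k hk => ?_
  simp only [mem_Ico] at hk
  rw [amhs_E1, amhs_nil, zTerm_eq, zTerm_eq, he,
    show sg 2 = 1 from by norm_num [sg], show sg 1 = 1 from by norm_num [sg],
    show (2:ℤ).natAbs = 2 from rfl, show (1:ℤ).natAbs = 1 from rfl]
  rw [one_pow]
  ring

lemma tendsto_cauchy (e : ℤ) (he : e.natAbs = 2) :
    Tendsto (fun N => ∑ n ∈ Icc 1 N, cterm (sg e) n) atTop
      (𝓝 ((∑' k : ℕ, zTerm 2 k * amhs [] (k - 1))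
        * (∑' k : ℕ, zTerm e k * amhs [1] (k - 1)))) := by
  have hu := summable_term_norm 2 (by norm_num) [] (by simp)
  have hv := summable_term_norm e (by omega) [1] (by norm_num)
  have hH := hasSum_sum_range_mul_of_summable_norm hu hv
  have h1 := hH.tendsto_sum_nat.comp (tendsto_add_atTop_nat 1)
  apply h1.congr
  intro N
  show ∑ n ∈ range (N + 1), ∑ k ∈ range (n + 1), _ = _
  rw [range_succ_to_Icc (fun n => ∑ k ∈ range (n + 1),
      (zTerm 2 k * amhs [] (k - 1)) * (zTerm e (n - k) * amhs [1] (n - k - 1)))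
    (by simp [zTerm])]
  exact Finset.sum_congr rfl fun n _ => cauchy_coeff e he n

lemma FB (N : ℕ) :
    6 * amhs [3, 1, 1] N + 3 * amhs [2, 2, 1] N + amhs [2, 1, 2] N
      = ∑ n ∈ Icc 1 N, cterm 1 n := by
  have h := MB N
  rw [amhs_E3, amhs_E3, amhs_E3]
  norm_num [sg]
  linarith [h]

lemma FB' (N : ℕ) :
    2 * amhs [3, -1, 1] N + 2 * amhs [-3, 1, -1] N + 2 * amhs [-3, -1, -1] N
        + amhs [2, -2, 1] N + amhs [-2, 2, -1] N + amhs [-2, -2, -1] N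
        + amhs [-2, 1, -2] N
      = ∑ n ∈ Icc 1 N, cterm (-1) n := by
  have h := MB' N
  rw [amhs_E3, amhs_E3, amhs_E3, amhs_E3, amhs_E3, amhs_E3, amhs_E3]
  norm_num [sg]
  linarith [h]

lemma azeta_tendsto (x : ℤ) (hx : 2 ≤ x.natAbs) (r : List ℤ) (hr : ∀ s ∈ r, s ≠ 0) :
    Tendsto (amhs (x :: r)) atTop (𝓝 (azeta (x :: r))) := by
  have h := tendsto_amhs x hx r hr
  unfold azeta
  rw [h.limUnder_eq]
  exact h

theorem stmt19 :
    (6 * azeta [3, 1, 1] + 2 * azeta [2, 2, 1] + azeta [2, 1, 2] =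
        azeta [2, 2, 1] + azeta [2, 1, 2] + azeta [2, 3] + azeta [4, 1]) ∧
      (2 * azeta [3, -1, 1] + 2 * azeta [-3, -1, -1] + 2 * azeta [-3, 1, -1] +
          azeta [-2, -2, -1] + azeta [-2, 2, -1] + azeta [-2, 1, -2] =
        azeta [-2, 1, 2] + azeta [-2, 2, 1] + azeta [-2, 3] + azeta [-4, 1]) := by
  have t2 := azeta_tendsto 2 (by norm_num) [] (by simp)
  have t21 := azeta_tendsto 2 (by norm_num) [1] (by norm_num)
  have t311 := azeta_tendsto 3 (by norm_num) [1, 1] (by norm_num)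
  have t221 := azeta_tendsto 2 (by norm_num) [2, 1] (by norm_num)
  have t212 := azeta_tendsto 2 (by norm_num) [1, 2] (by norm_num)
  have t41 := azeta_tendsto 4 (by norm_num) [1] (by norm_num)
  have t23 := azeta_tendsto 2 (by norm_num) [3] (by norm_num)
  have e2 : azeta [2] = ∑' k : ℕ, zTerm 2 k * amhs [] (k - 1) :=
    tendsto_nhds_unique t2 (tendsto_amhs 2 (by norm_num) [] (by simp))
  -- Part (i)
  have e21 : azeta [2, 1] = ∑' k : ℕ, zTerm 2 k * amhs [1] (k - 1) :=
    tendsto_nhds_unique t21 (tendsto_amhs 2 (by norm_num) [1] (by norm_num))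
  have hc : Tendsto (fun N => ∑ n ∈ Icc 1 N, cterm 1 n) atTop
      (𝓝 (azeta [2] * azeta [2, 1])) := by
    rw [e2, e21]
    have := tendsto_cauchy 2 rfl
    rwa [show sg 2 = 1 from by norm_num [sg]] at this
  have hA : Tendsto (fun N => 6 * amhs [3, 1, 1] N + 3 * amhs [2, 2, 1] N + amhs [2, 1, 2] N)
      atTop (𝓝 (6 * azeta [3, 1, 1] + 3 * azeta [2, 2, 1] + azeta [2, 1, 2])) :=
    ((t311.const_mul 6).add (t221.const_mul 3)).add t212
  have KEY1 : 6 * azeta [3, 1, 1] + 3 * azeta [2, 2, 1] + azeta [2, 1, 2]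
      = azeta [2] * azeta [2, 1] :=
    tendsto_nhds_unique hA (hc.congr fun N => (FB N).symm)
  have hA2 : Tendsto (fun N => amhs [2, 2, 1] N + amhs [2, 2, 1] N + amhs [2, 1, 2] N
        + amhs [4, 1] N + amhs [2, 3] N) atTop
      (𝓝 (azeta [2, 2, 1] + azeta [2, 2, 1] + azeta [2, 1, 2] + azeta [4, 1] + azeta [2, 3])) :=
    (((t221.add t221).add t212).add t41).add t23
  have KEY2 : azeta [2] * azeta [2, 1]
      = azeta [2, 2, 1] + azeta [2, 2, 1] + azeta [2, 1, 2] + azeta [4, 1] + azeta [2, 3] :=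
    tendsto_nhds_unique (t2.mul t21) (hA2.congr fun N => (stuffle3 2 2 1 4 3 zt22 zt21 N).symm)
  -- Part (ii)
  have tm21 := azeta_tendsto (-2) (by norm_num) [1] (by norm_num)
  have t3m11 := azeta_tendsto 3 (by norm_num) [-1, 1] (by norm_num)
  have tm31m1 := azeta_tendsto (-3) (by norm_num) [1, -1] (by norm_num)
  have tm3m1m1 := azeta_tendsto (-3) (by norm_num) [-1, -1] (by norm_num)
  have t2m21 := azeta_tendsto 2 (by norm_num) [-2, 1] (by norm_num)
  have tm22m1 := azeta_tendsto (-2) (by norm_num) [2, -1] (by norm_num)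
  have tm2m2m1 := azeta_tendsto (-2) (by norm_num) [-2, -1] (by norm_num)
  have tm21m2 := azeta_tendsto (-2) (by norm_num) [1, -2] (by norm_num)
  have tm212 := azeta_tendsto (-2) (by norm_num) [1, 2] (by norm_num)
  have tm221 := azeta_tendsto (-2) (by norm_num) [2, 1] (by norm_num)
  have tm23 := azeta_tendsto (-2) (by norm_num) [3] (by norm_num)
  have tm41 := azeta_tendsto (-4) (by norm_num) [1] (by norm_num)
  have em21 : azeta [-2, 1] = ∑' k : ℕ, zTerm (-2) k * amhs [1] (k - 1) :=
    tendsto_nhds_unique tm21 (tendsto_amhs (-2) (by norm_num) [1] (by norm_num))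
  have hc' : Tendsto (fun N => ∑ n ∈ Icc 1 N, cterm (-1) n) atTop
      (𝓝 (azeta [2] * azeta [-2, 1])) := by
    rw [e2, em21]
    have := tendsto_cauchy (-2) (by norm_num)
    rwa [show sg (-2) = -1 from by norm_num [sg]] at this
  have hB : Tendsto (fun N => 2 * amhs [3, -1, 1] N + 2 * amhs [-3, 1, -1] N
        + 2 * amhs [-3, -1, -1] N + amhs [2, -2, 1] N + amhs [-2, 2, -1] N
        + amhs [-2, -2, -1] N + amhs [-2, 1, -2] N) atTop
      (𝓝 (2 * azeta [3, -1, 1] + 2 * azeta [-3, 1, -1] + 2 * azeta [-3, -1, -1]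
        + azeta [2, -2, 1] + azeta [-2, 2, -1] + azeta [-2, -2, -1] + azeta [-2, 1, -2])) :=
    (((((((t3m11.const_mul 2).add (tm31m1.const_mul 2)).add (tm3m1m1.const_mul 2)).add
      t2m21).add tm22m1).add tm2m2m1).add tm21m2)
  have KEY1' : 2 * azeta [3, -1, 1] + 2 * azeta [-3, 1, -1] + 2 * azeta [-3, -1, -1]
        + azeta [2, -2, 1] + azeta [-2, 2, -1] + azeta [-2, -2, -1] + azeta [-2, 1, -2]
      = azeta [2] * azeta [-2, 1] :=
    tendsto_nhds_unique hB (hc'.congr fun N => (FB' N).symm)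
  have hB2 : Tendsto (fun N => amhs [2, -2, 1] N + amhs [-2, 2, 1] N + amhs [-2, 1, 2] N
        + amhs [-4, 1] N + amhs [-2, 3] N) atTop
      (𝓝 (azeta [2, -2, 1] + azeta [-2, 2, 1] + azeta [-2, 1, 2]
        + azeta [-4, 1] + azeta [-2, 3])) :=
    (((t2m21.add tm221).add tm212).add tm41).add tm23
  have KEY2' : azeta [2] * azeta [-2, 1]
      = azeta [2, -2, 1] + azeta [-2, 2, 1] + azeta [-2, 1, 2]
        + azeta [-4, 1] + azeta [-2, 3] :=
    tendsto_nhds_unique (t2.mul tm21)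
      (hB2.congr fun N => (stuffle3 2 (-2) 1 (-4) 3 zt2m2 zt21 N).symm)
  constructor
  · linarith [KEY1, KEY2]
  · linarith [KEY1', KEY2']
end
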